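/- arXiv:2001.05306 — 2 statements merged into one kernel-verified Lean document; each statement's English description precedes it below -/
import Mathlib

section
/- If a line ℓ, not a maximal line of a GC_n set X, passes through exactly k nodes of X that each lie on exactly one maximal line of X (1_m-nodes), then the ℓ-lowering X̂(ℓ) of X is a GC_s set with s = def(X) + k − 2, where def(X) = n + 2 − #M(X). -/
attribute [local instance] Classical.propDecidable

/-- Evaluate a bivariate polynomial at a point of the plane. -/
noncomputable def evalPt (p : MvPolynomial (Fin 2) ℝ) (A : ℝ × ℝ) : ℝ :=
  MvPolynomial.eval ![A.1, A.2] p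

/-- A (polynomial defining a) line: a bivariate polynomial of total degree exactly 1. -/
def IsLinearPoly (l : MvPolynomial (Fin 2) ℝ) : Prop := l.totalDegree = 1

/-- A point lies on the line defined by `l`. -/
def OnLine (l : MvPolynomial (Fin 2) ℝ) (A : ℝ × ℝ) : Prop := evalPt l A = 0

/-- Two degree-1 polynomials define the same line (same zero set). -/
def SameLine (l₁ l₂ : MvPolynomial (Fin 2) ℝ) : Prop := ∀ P, OnLine l₁ P ↔ OnLine l₂ P

/-- `X` is an `n`-correct set of nodes in the plane. -/
def NCorrect (n : ℕ) (X : Finset (ℝ × ℝ)) : Prop :=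
  X.card = (n + 2) * (n + 1) / 2 ∧
  ∀ c : (ℝ × ℝ) → ℝ, ∃! p : MvPolynomial (Fin 2) ℝ,
    p.totalDegree ≤ n ∧ ∀ A ∈ X, evalPt p A = c A

/-- `p` is the `n`-fundamental polynomial of node `A` in `X`. -/
def IsFundamental (n : ℕ) (X : Finset (ℝ × ℝ)) (A : ℝ × ℝ)
    (p : MvPolynomial (Fin 2) ℝ) : Prop :=
  p.totalDegree ≤ n ∧ evalPt p A = 1 ∧ ∀ B ∈ X, B ≠ A → evalPt p B = 0

/-- Node `A` of `X` uses line `l`. -/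
def Uses (n : ℕ) (X : Finset (ℝ × ℝ)) (A : ℝ × ℝ) (l : MvPolynomial (Fin 2) ℝ) : Prop :=
  ∃ p, IsFundamental n X A p ∧ l ∣ p

/-- The set of nodes of `X` using the line `l` (the set `Xˡ`). -/
noncomputable def UsedSet (n : ℕ) (X : Finset (ℝ × ℝ)) (l : MvPolynomial (Fin 2) ℝ) :
    Finset (ℝ × ℝ) := X.filter (fun A => Uses n X A l)

/-- `l` is a maximal line of `X`: a line passing through exactly `n+1` nodes. -/
def IsMaximalLine (n : ℕ) (X : Finset (ℝ × ℝ)) (l : MvPolynomial (Fin 2) ℝ) : Prop :=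
  IsLinearPoly l ∧ (X.filter (fun A => OnLine l A)).card = n + 1

/-- `X` is a `GC_n` set. -/
def GCSet (n : ℕ) (X : Finset (ℝ × ℝ)) : Prop :=
  NCorrect n X ∧
  ∀ A ∈ X, ∃ f : Fin n → MvPolynomial (Fin 2) ℝ,
    (∀ i, IsLinearPoly (f i)) ∧ IsFundamental n X A (∏ i, f i)

/-- `L` is a set of representatives (one per line) of all maximal lines of `X`. -/
def MaximalLinesRep (n : ℕ) (X : Finset (ℝ × ℝ))
    (L : Finset (MvPolynomial (Fin 2) ℝ)) : Prop :=
  (∀ l ∈ L, IsMaximalLine n X l) ∧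
  (∀ l₁ ∈ L, ∀ l₂ ∈ L, SameLine l₁ l₂ → l₁ = l₂) ∧
  (∀ l, IsMaximalLine n X l → ∃ l' ∈ L, SameLine l l')

/-- A maximal line `lam` is `l`-disjoint: it meets `l` at no node of `X`. -/
def IsDisjointMax (n : ℕ) (X : Finset (ℝ × ℝ)) (l lam : MvPolynomial (Fin 2) ℝ) : Prop :=
  IsMaximalLine n X lam ∧ ∀ A ∈ X, ¬(OnLine lam A ∧ OnLine l A)

/-- A maximal line `lam` is a member of a pair of `l`-adjoint maximal lines. -/
def IsAdjointMax (n : ℕ) (X : Finset (ℝ × ℝ)) (l lam : MvPolynomial (Fin 2) ℝ) : Prop :=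
  IsMaximalLine n X lam ∧ ∃ lam', IsMaximalLine n X lam' ∧ ¬SameLine lam lam' ∧
    ∃ A ∈ X, OnLine lam A ∧ OnLine lam' A ∧ OnLine l A

/-- The `l`-lowering `X̂(l)` of `X`. -/
noncomputable def Lowering (n : ℕ) (X : Finset (ℝ × ℝ)) (l : MvPolynomial (Fin 2) ℝ) :
    Finset (ℝ × ℝ) :=
  X.filter (fun A => ¬ ∃ lam, (IsDisjointMax n X l lam ∨ IsAdjointMax n X l lam) ∧ OnLine lam A)

/-- A node `A` is a `1_m`-node of `X` w.r.t. the maximal-line representatives `L`: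
it lies on exactly one maximal line. -/
def Is1mNode (L : Finset (MvPolynomial (Fin 2) ℝ)) (A : ℝ × ℝ) : Prop :=
  (L.filter (fun l => OnLine l A)).card = 1

/-- `k` lines in general position: no two parallel (any two meet in exactly one point),
no three concurrent. -/
def InGenPos (k : ℕ) (f : Fin k → MvPolynomial (Fin 2) ℝ) : Prop :=
  (∀ i, IsLinearPoly (f i)) ∧
  (∀ i j, i ≠ j → ∃! P : ℝ × ℝ, OnLine (f i) P ∧ OnLine (f j) P) ∧
  (∀ i j m, i ≠ j → j ≠ m → i ≠ m →
    ¬ ∃ P : ℝ × ℝ, OnLine (f i) P ∧ OnLine (f j) P ∧ OnLine (f m) P)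

/-- `X` is a Chung-Yao lattice of degree `m`. -/
def IsChungYao (m : ℕ) (X : Finset (ℝ × ℝ)) : Prop :=
  ∃ f : Fin (m + 2) → MvPolynomial (Fin 2) ℝ, InGenPos (m + 2) f ∧
    ∀ P : ℝ × ℝ, P ∈ X ↔ ∃ i j, i ≠ j ∧ OnLine (f i) P ∧ OnLine (f j) P
open MvPolynomial Finset

lemma sameLine_refl (l : MvPolynomial (Fin 2) ℝ) : SameLine l l := fun _ => Iff.rfl

lemma sameLine_symm {l₁ l₂ : MvPolynomial (Fin 2) ℝ} (h : SameLine l₁ l₂) : SameLine l₂ l₁ :=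
  fun P => (h P).symm

lemma sameLine_trans {l₁ l₂ l₃ : MvPolynomial (Fin 2) ℝ} (h : SameLine l₁ l₂)
    (h' : SameLine l₂ l₃) : SameLine l₁ l₃ := fun P => (h P).trans (h' P)

lemma evalPt_mul (p q : MvPolynomial (Fin 2) ℝ) (A : ℝ × ℝ) :
    evalPt (p * q) A = evalPt p A * evalPt q A := by simp [evalPt]

lemma evalPt_add (p q : MvPolynomial (Fin 2) ℝ) (A : ℝ × ℝ) :
    evalPt (p + q) A = evalPt p A + evalPt q A := by simp [evalPt]

lemma evalPt_smul (c : ℝ) (p : MvPolynomial (Fin 2) ℝ) (A : ℝ × ℝ) :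
    evalPt (c • p) A = c * evalPt p A := by
  simp [evalPt, smul_eq_C_mul]

lemma evalPt_prod {ι : Type*} (s : Finset ι) (f : ι → MvPolynomial (Fin 2) ℝ) (A : ℝ × ℝ) :
    evalPt (∏ i ∈ s, f i) A = ∏ i ∈ s, evalPt (f i) A := by
  simp [evalPt]

lemma fin2_finsupp_eq (d : Fin 2 →₀ ℕ) :
    d = Finsupp.single 0 (d 0) + Finsupp.single 1 (d 1) := by
  ext i; fin_cases i <;> simp

lemma fin2_finsupp_sum (d : Fin 2 →₀ ℕ) : (d.sum fun _ n => n) = d 0 + d 1 := by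
  rw [Finsupp.sum_fintype _ _ (fun _ => rfl), Fin.sum_univ_two]

/-- Interface lemma: a linear polynomial is given by coefficients `a b c` with `(a,b) ≠ 0`. -/
lemma linear_coeffs {p : MvPolynomial (Fin 2) ℝ} (h : IsLinearPoly p) :
    ∃ a b c : ℝ, ¬(a = 0 ∧ b = 0) ∧ ∀ A : ℝ × ℝ, evalPt p A = a * A.1 + b * A.2 + c := by
  have hle : p.totalDegree ≤ 1 := le_of_eq h
  refine ⟨coeff (Finsupp.single 0 1) p, coeff (Finsupp.single 1 1) p, coeff 0 p, ?_, ?_⟩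
  · rintro ⟨h0, h1⟩
    have hne : p ≠ 0 := by
      intro h0'; rw [h0'] at h; simp [IsLinearPoly] at h
    have hsupp : p.support.Nonempty := MvPolynomial.support_nonempty.mpr hne
    obtain ⟨d, hd, hdeq⟩ := Finset.exists_mem_eq_sup _ hsupp (fun d : Fin 2 →₀ ℕ => d.sum fun _ n => n)
    have hdeg : (d.sum fun _ n => n) = 1 := by
      rw [← hdeq]; exact h
    rw [fin2_finsupp_sum] at hdeg
    have hcoeff : coeff d p ≠ 0 := by rwa [← MvPolynomial.mem_support_iff]
    -- d is single 0 1 or single 1 1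
    have hd2 := fin2_finsupp_eq d
    rcases Nat.eq_zero_or_pos (d 0) with h00 | h01
    · have : d 1 = 1 := by omega
      rw [h00, this, Finsupp.single_zero, zero_add] at hd2
      rw [hd2] at hcoeff; exact hcoeff h1
    · have h01' : d 0 = 1 := by omega
      have : d 1 = 0 := by omega
      rw [h01', this, Finsupp.single_zero, add_zero] at hd2
      rw [hd2] at hcoeff; exact hcoeff h0
  · intro A
    have hsub : p.support ⊆ {0, Finsupp.single 0 1, Finsupp.single 1 1} := by
      intro d hd
      have hdeg : d 0 + d 1 ≤ 1 := by
        rw [← fin2_finsupp_sum]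
        exact le_trans (MvPolynomial.le_totalDegree hd) hle
      have hd2 := fin2_finsupp_eq d
      simp only [Finset.mem_insert, Finset.mem_singleton]
      rcases Nat.eq_zero_or_pos (d 0) with h00 | h01
      · rcases Nat.eq_zero_or_pos (d 1) with h10 | h11
        · left; rw [hd2, h00, h10]; simp
        · right; right
          have h1 : d 1 = 1 := by omega
          rw [hd2, h00, h1, Finsupp.single_zero, zero_add]
      · right; left
        have h1 : d 0 = 1 := by omega
        have h2 : d 1 = 0 := by omega
        rw [hd2, h1, h2, Finsupp.single_zero, add_zero]
    have hne01 : (0 : Fin 2 →₀ ℕ) ≠ Finsupp.single 0 1 := by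
      intro hcon; have := DFunLike.congr_fun hcon 0; simp at this
    have hne02 : (0 : Fin 2 →₀ ℕ) ≠ Finsupp.single 1 1 := by
      intro hcon; have := DFunLike.congr_fun hcon 1; simp at this
    have hne12 : (Finsupp.single 0 1 : Fin 2 →₀ ℕ) ≠ Finsupp.single 1 1 := by
      intro hcon; have := DFunLike.congr_fun hcon 0; simp at this
    have heval : evalPt p A =
        ∑ d ∈ ({0, Finsupp.single 0 1, Finsupp.single 1 1} : Finset (Fin 2 →₀ ℕ)),
          coeff d p * ∏ i : Fin 2, (![A.1, A.2]) i ^ d i := by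
      rw [evalPt, MvPolynomial.eval_eq']
      refine Finset.sum_subset hsub (fun d _ hd => ?_)
      rw [MvPolynomial.notMem_support_iff.mp hd, zero_mul]
    rw [heval, Finset.sum_insert (by simp [hne01, hne02]),
      Finset.sum_insert (by simp [hne12]), Finset.sum_singleton]
    simp only [Fin.prod_univ_two, Finsupp.single_apply, Finsupp.coe_zero, Pi.zero_apply]
    norm_num
    ring

/-- G1: parametrization of the zero set of a linear polynomial through a point on it. -/
lemma line_param {l : MvPolynomial (Fin 2) ℝ} (hl : IsLinearPoly l) {P : ℝ × ℝ}
    (hP : OnLine l P) :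
    ∃ v : ℝ × ℝ, v ≠ 0 ∧ ∀ R : ℝ × ℝ, OnLine l R ↔ ∃ t : ℝ,
      R = (P.1 + t * v.1, P.2 + t * v.2) := by
  obtain ⟨a, b, c, hab, hev⟩ := linear_coeffs hl
  have hPc : a * P.1 + b * P.2 + c = 0 := by rw [← hev]; exact hP
  refine ⟨(b, -a), ?_, ?_⟩
  · intro hcon
    rw [Prod.ext_iff] at hcon
    exact hab ⟨by simpa using hcon.2, hcon.1⟩
  · intro R
    unfold OnLine
    rw [hev]
    constructor
    · intro hR
      by_cases hb : b = 0
      · have ha : a ≠ 0 := fun h' => hab ⟨h', hb⟩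
        subst hb
        have h1 : R.1 = P.1 := by
          have h2 : a * R.1 = a * P.1 := by linarith
          exact mul_left_cancel₀ ha h2
        refine ⟨(P.2 - R.2) / a, ?_⟩
        rw [Prod.ext_iff]
        constructor
        · simp [h1]
        · show R.2 = P.2 + (P.2 - R.2) / a * (-a)
          field_simp
          ring
      · refine ⟨(R.1 - P.1) / b, ?_⟩
        rw [Prod.ext_iff]
        constructor
        · show R.1 = P.1 + (R.1 - P.1) / b * b
          field_simp
          ring
        · show R.2 = P.2 + (R.1 - P.1) / b * (-a)
          have h3 : (R.1 - P.1) / b * (-a) = (a * P.1 - a * R.1) / b := by ring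
          rw [h3, ← sub_eq_iff_eq_add', eq_div_iff hb]
          linarith
    · rintro ⟨t, rfl⟩
      show a * (P.1 + t * b) + b * (P.2 + t * (-a)) + c = 0
      linear_combination hPc

/-- G2: two linear polynomials through two distinct common points define the same line. -/
lemma sameLine_of_two {l₁ l₂ : MvPolynomial (Fin 2) ℝ} (h₁ : IsLinearPoly l₁)
    (h₂ : IsLinearPoly l₂) {P Q : ℝ × ℝ} (hPQ : P ≠ Q)
    (hP1 : OnLine l₁ P) (hQ1 : OnLine l₁ Q) (hP2 : OnLine l₂ P) (hQ2 : OnLine l₂ Q) :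
    SameLine l₁ l₂ := by
  obtain ⟨v₁, hv₁, hiff₁⟩ := line_param h₁ hP1
  obtain ⟨v₂, hv₂, hiff₂⟩ := line_param h₂ hP2
  obtain ⟨t₁, ht₁⟩ := (hiff₁ Q).mp hQ1
  obtain ⟨t₂, ht₂⟩ := (hiff₂ Q).mp hQ2
  have ht₁0 : t₁ ≠ 0 := by
    rintro rfl; apply hPQ; rw [ht₁]; simp
  have ht₂0 : t₂ ≠ 0 := by
    rintro rfl; apply hPQ; rw [ht₂]; simp
  have hv : t₁ * v₁.1 = t₂ * v₂.1 ∧ t₁ * v₁.2 = t₂ * v₂.2 := by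
    rw [ht₂] at ht₁
    simp only [Prod.mk.injEq] at ht₁
    constructor <;> [linarith [ht₁.1]; linarith [ht₁.2]]
  intro R
  rw [hiff₁ R, hiff₂ R]
  constructor
  · rintro ⟨t, rfl⟩
    refine ⟨t * t₂ / t₁, ?_⟩
    rw [Prod.ext_iff]
    constructor
    · show P.1 + t * v₁.1 = P.1 + t * t₂ / t₁ * v₂.1
      field_simp
      linear_combination t * hv.1
    · show P.2 + t * v₁.2 = P.2 + t * t₂ / t₁ * v₂.2
      field_simp
      linear_combination t * hv.2
  · rintro ⟨t, rfl⟩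
    refine ⟨t * t₁ / t₂, ?_⟩
    rw [Prod.ext_iff]
    constructor
    · show P.1 + t * v₂.1 = P.1 + t * t₁ / t₂ * v₁.1
      field_simp
      linear_combination -t * hv.1
    · show P.2 + t * v₂.2 = P.2 + t * t₁ / t₂ * v₁.2
      field_simp
      linear_combination -t * hv.2

/-- G3: two non-same lines meet in at most one point. -/
lemma eq_of_two_common {l₁ l₂ : MvPolynomial (Fin 2) ℝ} (h₁ : IsLinearPoly l₁)
    (h₂ : IsLinearPoly l₂) (hns : ¬ SameLine l₁ l₂) {P Q : ℝ × ℝ}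
    (hP1 : OnLine l₁ P) (hQ1 : OnLine l₁ Q) (hP2 : OnLine l₂ P) (hQ2 : OnLine l₂ Q) :
    P = Q := by
  by_contra hne
  exact hns (sameLine_of_two h₁ h₂ hne hP1 hQ1 hP2 hQ2)

/-- G4: maximality transfers along `SameLine`. -/
lemma isMaximalLine_congr {n : ℕ} {X : Finset (ℝ × ℝ)} {l₁ l₂ : MvPolynomial (Fin 2) ℝ}
    (h : SameLine l₁ l₂) (h₂ : IsLinearPoly l₂) (hm : IsMaximalLine n X l₁) :
    IsMaximalLine n X l₂ := by
  refine ⟨h₂, ?_⟩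
  rw [← hm.2]
  congr 1
  exact Finset.filter_congr (fun A _ => by simpa using (h A).symm)

/-- Restriction of a bivariate polynomial to the parametrized line `t ↦ P + t v`. -/
noncomputable def lineRestrict (P v : ℝ × ℝ) :
    MvPolynomial (Fin 2) ℝ →+* Polynomial ℝ :=
  MvPolynomial.eval₂Hom Polynomial.C
    (fun i => Polynomial.C (![P.1, P.2] i) + Polynomial.C (![v.1, v.2] i) * Polynomial.X)

lemma lineRestrict_eval (P v : ℝ × ℝ) (p : MvPolynomial (Fin 2) ℝ) (t : ℝ) :
    (lineRestrict P v p).eval t = evalPt p (P.1 + t * v.1, P.2 + t * v.2) := by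
  have hC : (Polynomial.evalRingHom t).comp Polynomial.C = RingHom.id ℝ := by
    ext r; simp
  have hfun : (fun i : Fin 2 => Polynomial.eval t (Polynomial.C (![P.1, P.2] i) +
        Polynomial.C (![v.1, v.2] i) * Polynomial.X))
      = ![(P.1 + t * v.1, P.2 + t * v.2).1, (P.1 + t * v.1, P.2 + t * v.2).2] := by
    funext i; fin_cases i <;> simp <;> ring
  calc (lineRestrict P v p).eval t
      = (Polynomial.evalRingHom t) (MvPolynomial.eval₂ Polynomial.C
          (fun i => Polynomial.C (![P.1, P.2] i) + Polynomial.C (![v.1, v.2] i) * Polynomial.X)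
          p) := rfl
    _ = MvPolynomial.eval₂ ((Polynomial.evalRingHom t).comp Polynomial.C)
          (fun i => Polynomial.eval t (Polynomial.C (![P.1, P.2] i) +
            Polynomial.C (![v.1, v.2] i) * Polynomial.X)) p :=
        MvPolynomial.eval₂_comp_left _ _ _ _
    _ = evalPt p (P.1 + t * v.1, P.2 + t * v.2) := by rw [hC, hfun]; rfl

lemma lineRestrict_natDegree_le (P v : ℝ × ℝ) (p : MvPolynomial (Fin 2) ℝ) :
    (lineRestrict P v p).natDegree ≤ p.totalDegree := by
  show (MvPolynomial.eval₂ Polynomial.C _ p).natDegree ≤ _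
  rw [MvPolynomial.eval₂_eq]
  apply Polynomial.natDegree_sum_le_of_forall_le
  intro d hd
  calc (Polynomial.C (MvPolynomial.coeff d p) *
        ∏ i ∈ d.support, (Polynomial.C (![P.1, P.2] i) +
          Polynomial.C (![v.1, v.2] i) * Polynomial.X) ^ d i).natDegree
      ≤ (Polynomial.C (MvPolynomial.coeff d p)).natDegree +
        (∏ i ∈ d.support, (Polynomial.C (![P.1, P.2] i) +
          Polynomial.C (![v.1, v.2] i) * Polynomial.X) ^ d i).natDegree :=
        Polynomial.natDegree_mul_le
    _ ≤ 0 + ∑ i ∈ d.support, ((Polynomial.C (![P.1, P.2] i) +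
          Polynomial.C (![v.1, v.2] i) * Polynomial.X) ^ d i).natDegree := by
        gcongr
        · simp
        · exact Polynomial.natDegree_prod_le _ _
    _ ≤ ∑ i ∈ d.support, d i * 1 := by
        rw [zero_add]
        apply Finset.sum_le_sum
        intro i _
        refine le_trans (Polynomial.natDegree_pow_le) ?_
        apply Nat.mul_le_mul_left
        refine le_trans (Polynomial.natDegree_add_le _ _) ?_
        simp [Polynomial.natDegree_C_mul_le]
        exact le_trans (Polynomial.natDegree_mul_le) (by simp)
    _ ≤ p.totalDegree := by
        simp only [mul_one]
        exact MvPolynomial.le_totalDegree hd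

/-- In an `m`-correct set, every node has a fundamental polynomial. -/
lemma ncorrect_fundamental {m : ℕ} {Y : Finset (ℝ × ℝ)} (h : NCorrect m Y) {B : ℝ × ℝ}
    (hB : B ∈ Y) : ∃ q, IsFundamental m Y B q := by
  obtain ⟨p, ⟨hdeg, hint⟩, _⟩ := h.2 (fun A => if A = B then 1 else 0)
  refine ⟨p, hdeg, ?_, ?_⟩
  · have := hint B hB; simpa using this
  · intro A hA hAB
    have := hint A hA; simpa [hAB] using this

/-- In an `m`-correct set, only the zero polynomial of degree `≤ m` vanishes on all nodes. -/
lemma ncorrect_vanish {m : ℕ} {Y : Finset (ℝ × ℝ)} (h : NCorrect m Y)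
    {p : MvPolynomial (Fin 2) ℝ} (hdeg : p.totalDegree ≤ m)
    (hv : ∀ A ∈ Y, evalPt p A = 0) : p = 0 := by
  obtain ⟨q, _, hq⟩ := h.2 (fun _ => 0)
  have h1 := hq p ⟨hdeg, hv⟩
  have h2 := hq 0 ⟨by simp, by intro A _; simp [evalPt]⟩
  rw [h1, h2]

/-- P6: in an `m`-correct set, a line passes through at most `m+1` nodes. -/
lemma line_nodes_le {m : ℕ} {Y : Finset (ℝ × ℝ)} (h : NCorrect m Y)
    {l : MvPolynomial (Fin 2) ℝ} (hl : IsLinearPoly l) :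
    (Y.filter (fun A => OnLine l A)).card ≤ m + 1 := by
  by_contra hcon
  push_neg at hcon
  set S := Y.filter (fun A => OnLine l A) with hS
  obtain ⟨B₀, hB₀⟩ : S.Nonempty := Finset.card_pos.mp (by omega)
  have hB₀Y : B₀ ∈ Y := (Finset.mem_filter.mp hB₀).1
  have hB₀l : OnLine l B₀ := (Finset.mem_filter.mp hB₀).2
  obtain ⟨q, hqdeg, hq1, hq0⟩ := ncorrect_fundamental h hB₀Y
  obtain ⟨v, hv, hiff⟩ := line_param hl hB₀l
  -- parameters of the other nodes
  have hpar : ∀ B ∈ S.erase B₀, ∃ t : ℝ, B = (B₀.1 + t * v.1, B₀.2 + t * v.2) := by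
    intro B hBe
    exact (hiff B).mp (Finset.mem_filter.mp (Finset.mem_of_mem_erase hBe)).2
  choose τ hτ using hpar
  -- the restricted polynomial
  set f := lineRestrict B₀ v q with hf
  have hfdeg : f.natDegree ≤ m := le_trans (lineRestrict_natDegree_le _ _ _) hqdeg
  have hroots : ∀ B (hB : B ∈ S.erase B₀), f.eval (τ B hB) = 0 := by
    intro B hB
    rw [lineRestrict_eval, ← hτ B hB]
    exact hq0 B (Finset.mem_filter.mp (Finset.mem_of_mem_erase hB)).1
      (Finset.ne_of_mem_erase hB)
  -- injectivity of the parameters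
  have hinj : ∀ B (hB : B ∈ S.erase B₀) B' (hB' : B' ∈ S.erase B₀),
      τ B hB = τ B' hB' → B = B' := by
    intro B hB B' hB' heq
    rw [hτ B hB, hτ B' hB', heq]
  -- the finset of roots
  classical
  let T : Finset ℝ := (S.erase B₀).attach.image (fun B => τ B.1 B.2)
  have hTcard : T.card = (S.erase B₀).card := by
    rw [Finset.card_image_of_injective]
    · exact Finset.card_attach
    · intro B B' heq
      exact Subtype.ext (hinj _ _ _ _ heq)
  have hTroots : ∀ t ∈ T, f.eval t = 0 := by
    intro t ht
    obtain ⟨B, _, rfl⟩ := Finset.mem_image.mp ht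
    exact hroots B.1 B.2
  have hcard' : f.natDegree < T.card := by
    rw [hTcard, Finset.card_erase_of_mem hB₀]
    omega
  have hf0 : f = 0 := Polynomial.eq_zero_of_natDegree_lt_card_of_eval_eq_zero' f T hTroots hcard'
  have : f.eval 0 = 1 := by
    rw [lineRestrict_eval]
    simpa using hq1
  rw [hf0] at this
  simp at this

/-- The index set of exponents of bivariate monomials of degree at most `m`. -/
noncomputable def expSet (m : ℕ) : Finset (ℕ × ℕ) :=
  (Finset.range (m + 1)).biUnion (fun t => Finset.HasAntidiagonal.antidiagonal t)

lemma mem_expSet {m : ℕ} {d : ℕ × ℕ} : d ∈ expSet m ↔ d.1 + d.2 ≤ m := by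
  simp only [expSet, Finset.mem_biUnion, Finset.mem_range, Finset.HasAntidiagonal.mem_antidiagonal]
  constructor
  · rintro ⟨t, ht, h⟩; omega
  · intro hle; exact ⟨d.1 + d.2, by omega, rfl⟩

lemma card_expSet (m : ℕ) : (expSet m).card = (m + 2) * (m + 1) / 2 := by
  have hdisj : ∀ t ∈ Finset.range (m + 1), ∀ t' ∈ Finset.range (m + 1), t ≠ t' →
      Disjoint (Finset.HasAntidiagonal.antidiagonal t) (Finset.HasAntidiagonal.antidiagonal t') := by
    intro t _ t' _ hne
    rw [Finset.disjoint_left]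
    intro d hd hd'
    rw [Finset.HasAntidiagonal.mem_antidiagonal] at hd hd'
    omega
  have h1 : (expSet m).card = ∑ t ∈ Finset.range (m + 1), (t + 1) := by
    rw [expSet, Finset.card_biUnion hdisj]
    exact Finset.sum_congr rfl (fun t _ => Finset.Nat.card_antidiagonal t)
  have h2 : (∑ t ∈ Finset.range (m + 1), (t + 1)) * 2 = (m + 2) * (m + 1) := by
    rw [Finset.sum_add_distrib, Finset.sum_const, Finset.card_range, add_mul,
      Finset.sum_range_id_mul_two]
    simp; ring
  omega

/-- Exponent pairs to finitely supported functions. -/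
noncomputable def fsOf (d : ℕ × ℕ) : Fin 2 →₀ ℕ :=
  Finsupp.single 0 d.1 + Finsupp.single 1 d.2

lemma fsOf_apply0 (d : ℕ × ℕ) : fsOf d 0 = d.1 := by simp [fsOf]
lemma fsOf_apply1 (d : ℕ × ℕ) : fsOf d 1 = d.2 := by simp [fsOf]

lemma fsOf_injective : Function.Injective fsOf := by
  intro d d' h
  have h0 := DFunLike.congr_fun h 0
  have h1 := DFunLike.congr_fun h 1
  rw [fsOf_apply0, fsOf_apply0] at h0
  rw [fsOf_apply1, fsOf_apply1] at h1
  exact Prod.ext h0 h1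

lemma fsOf_degree (d : ℕ × ℕ) : ((fsOf d).sum fun _ n => n) = d.1 + d.2 := by
  rw [fin2_finsupp_sum, fsOf_apply0, fsOf_apply1]

/-- The polynomial with given coefficients on monomials of degree ≤ m. -/
noncomputable def polyOf (m : ℕ) (v : {d // d ∈ expSet m} → ℝ) : MvPolynomial (Fin 2) ℝ :=
  ∑ d : {d // d ∈ expSet m}, MvPolynomial.monomial (fsOf d.1) (v d)

lemma polyOf_totalDegree (m : ℕ) (v : {d // d ∈ expSet m} → ℝ) :
    (polyOf m v).totalDegree ≤ m := by
  refine le_trans (MvPolynomial.totalDegree_finset_sum _ _) ?_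
  apply Finset.sup_le
  intro d _
  refine le_trans (MvPolynomial.totalDegree_monomial_le _ _) ?_
  have h1 : ((fsOf d.1).sum fun _ => id) = ((fsOf d.1).sum fun _ n => n) := rfl
  rw [h1, fsOf_degree]
  exact mem_expSet.mp d.2

lemma polyOf_coeff (m : ℕ) (v : {d // d ∈ expSet m} → ℝ) (e : {d // d ∈ expSet m}) :
    MvPolynomial.coeff (fsOf e.1) (polyOf m v) = v e := by
  rw [polyOf, MvPolynomial.coeff_sum]
  rw [Finset.sum_eq_single e]
  · rw [MvPolynomial.coeff_monomial, if_pos rfl]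
  · intro d _ hne
    rw [MvPolynomial.coeff_monomial, if_neg]
    intro hcon
    exact hne (Subtype.ext (fsOf_injective hcon))
  · intro h; exact absurd (Finset.mem_univ e) h

lemma polyOf_add (m : ℕ) (v w : {d // d ∈ expSet m} → ℝ) :
    polyOf m (v + w) = polyOf m v + polyOf m w := by
  rw [polyOf, polyOf, polyOf, ← Finset.sum_add_distrib]
  exact Finset.sum_congr rfl (fun d _ => by rw [Pi.add_apply, map_add])

lemma polyOf_smul (m : ℕ) (c : ℝ) (v : {d // d ∈ expSet m} → ℝ) :
    polyOf m (c • v) = c • polyOf m v := by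
  rw [polyOf, polyOf, Finset.smul_sum]
  exact Finset.sum_congr rfl (fun d _ => by
    rw [Pi.smul_apply, MvPolynomial.smul_monomial, smul_eq_mul])

/-- P5: correctness from cardinality and the vanishing property. -/
lemma ncorrect_of_vanish {m : ℕ} {Y : Finset (ℝ × ℝ)}
    (hcard : Y.card = (m + 2) * (m + 1) / 2)
    (hvanish : ∀ p : MvPolynomial (Fin 2) ℝ, p.totalDegree ≤ m →
      (∀ A ∈ Y, evalPt p A = 0) → p = 0) :
    NCorrect m Y := by
  classical
  refine ⟨hcard, ?_⟩
  set ι := {d // d ∈ expSet m}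
  -- the evaluation linear map
  let T : (ι → ℝ) →ₗ[ℝ] ({A // A ∈ Y} → ℝ) :=
    { toFun := fun v A => evalPt (polyOf m v) A.1
      map_add' := fun v w => by
        funext A
        show evalPt (polyOf m (v + w)) A.1 = evalPt (polyOf m v) A.1 + evalPt (polyOf m w) A.1
        rw [polyOf_add, evalPt_add]
      map_smul' := fun c v => by
        funext A
        show evalPt (polyOf m (c • v)) A.1 = c * evalPt (polyOf m v) A.1
        rw [polyOf_smul, evalPt_smul] }
  have hinj : Function.Injective T := by
    rw [injective_iff_map_eq_zero]
    intro v hv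
    have hz : polyOf m v = 0 := by
      apply hvanish _ (polyOf_totalDegree m v)
      intro A hA
      exact congrFun hv ⟨A, hA⟩
    funext e
    rw [← polyOf_coeff m v e, hz]
    simp
  have hfr : Module.finrank ℝ (ι → ℝ) = Module.finrank ℝ ({A // A ∈ Y} → ℝ) := by
    rw [Module.finrank_fintype_fun_eq_card, Module.finrank_fintype_fun_eq_card,
      Fintype.card_coe, Fintype.card_coe, card_expSet, hcard]
  have hsurj : Function.Surjective T :=
    (LinearMap.injective_iff_surjective_of_finrank_eq_finrank hfr).mp hinj
  intro c
  obtain ⟨v, hv⟩ := hsurj (fun A => c A.1)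
  refine ⟨polyOf m v, ⟨polyOf_totalDegree m v, ?_⟩, ?_⟩
  · intro A hA
    exact congrFun hv ⟨A, hA⟩
  · rintro q ⟨hqdeg, hqint⟩
    have hdiff : q - polyOf m v = 0 := by
      apply hvanish
      · rw [sub_eq_add_neg]
        refine le_trans (MvPolynomial.totalDegree_add _ _) ?_
        rw [MvPolynomial.totalDegree_neg]
        exact max_le hqdeg (polyOf_totalDegree m v)
      · intro A hA
        have h1 : evalPt (polyOf m v) A = c A := congrFun hv ⟨A, hA⟩
        have h2 : evalPt (q - polyOf m v) A = evalPt q A - evalPt (polyOf m v) A := by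
          simp [evalPt]
        rw [h2, hqint A hA, h1, sub_self]
    have := sub_eq_zero.mp hdiff
    exact this

lemma isLinearPoly_ne_zero {l : MvPolynomial (Fin 2) ℝ} (h : IsLinearPoly l) : l ≠ 0 := by
  intro hcon; rw [hcon] at h; simp [IsLinearPoly] at h

lemma isLinearPoly_smul {c : ℝ} (hc : c ≠ 0) {p : MvPolynomial (Fin 2) ℝ}
    (h : IsLinearPoly p) : IsLinearPoly (c • p) := by
  have h1 : (c • p).totalDegree ≤ p.totalDegree := MvPolynomial.totalDegree_smul_le c p
  have h2 : p.totalDegree ≤ (c • p).totalDegree := by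
    conv_lhs => rw [← inv_smul_smul₀ hc p]
    exact MvPolynomial.totalDegree_smul_le c⁻¹ (c • p)
  unfold IsLinearPoly at *
  omega

/-- P7: removing a maximal line from a `GC_{m+1}` set yields a `GC_m` set. -/
lemma remove_maximal {m : ℕ} {X : Finset (ℝ × ℝ)} (hX : GCSet (m + 1) X)
    {lam : MvPolynomial (Fin 2) ℝ} (hlam : IsMaximalLine (m + 1) X lam) :
    GCSet m (X.filter (fun A => ¬ OnLine lam A)) := by
  classical
  set X' := X.filter (fun A => ¬ OnLine lam A) with hX'
  have hcardX : X.card = (m + 3) * (m + 2) / 2 := hX.1.1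
  have hcardS : (X.filter (fun A => OnLine lam A)).card = m + 2 := hlam.2
  have hsplit := Finset.card_filter_add_card_filter_not
    (s := X) (p := fun A => OnLine lam A)
  have hcardX' : X'.card = (m + 2) * (m + 1) / 2 := by
    have h1 := hsplit
    rw [hcardS] at h1
    rw [← hX'] at h1
    have hmul : (m + 3) * (m + 2) = (m + 2) * (m + 1) + 2 * (m + 2) := by ring
    omega
  have hvanish : ∀ p : MvPolynomial (Fin 2) ℝ, p.totalDegree ≤ m →
      (∀ A ∈ X', evalPt p A = 0) → p = 0 := by
    intro p hdeg hv
    have hdeg2 : (lam * p).totalDegree ≤ m + 1 := by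
      refine le_trans (MvPolynomial.totalDegree_mul _ _) ?_
      rw [hlam.1]; omega
    have hzero : lam * p = 0 := by
      apply ncorrect_vanish hX.1 hdeg2
      intro A hA
      rw [evalPt_mul]
      by_cases hon : OnLine lam A
      · rw [hon]; ring
      · rw [hv A (Finset.mem_filter.mpr ⟨hA, hon⟩)]; ring
    rcases mul_eq_zero.mp hzero with h | h
    · exact absurd h (isLinearPoly_ne_zero hlam.1)
    · exact h
  have hNC : NCorrect m X' := ncorrect_of_vanish hcardX' hvanish
  refine ⟨hNC, ?_⟩
  intro A hA
  have hAX : A ∈ X := (Finset.mem_filter.mp hA).1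
  have hAlam : ¬ OnLine lam A := (Finset.mem_filter.mp hA).2
  obtain ⟨f, hflin, hfdeg, hf1, hf0⟩ := hX.2 A hAX
  set S := X.filter (fun A => OnLine lam A) with hSdef
  -- pigeonhole: some factor vanishes at two nodes of lam
  have hfac : ∀ B ∈ S, ∃ i : Fin (m + 1), evalPt (f i) B = 0 := by
    intro B hB
    have hBX : B ∈ X := (Finset.mem_filter.mp hB).1
    have hBA : B ≠ A := by
      intro hcon; rw [hcon] at hB
      exact hAlam (Finset.mem_filter.mp hB).2
    have := hf0 B hBX hBA
    rw [evalPt_prod] at this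
    obtain ⟨i, _, hi⟩ := Finset.prod_eq_zero_iff.mp this
    exact ⟨i, hi⟩
  choose gch hgch using hfac
  have hmap : ∀ B ∈ S.attach, gch B.1 B.2 ∈ (Finset.univ : Finset (Fin (m + 1))) :=
    fun _ _ => Finset.mem_univ _
  have hcards : (Finset.univ : Finset (Fin (m + 1))).card < S.attach.card := by
    rw [Finset.card_attach, hcardS, Finset.card_univ, Fintype.card_fin]; omega
  obtain ⟨B₁, _, B₂, _, hBne, hBeq⟩ :=
    Finset.exists_ne_map_eq_of_card_lt_of_maps_to hcards hmap
  set i := gch B₁.1 B₁.2 with hi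
  have hfi1 : evalPt (f i) B₁.1 = 0 := hgch B₁.1 B₁.2
  have hfi2 : evalPt (f i) B₂.1 = 0 := by rw [hBeq]; exact hgch B₂.1 B₂.2
  have hB1lam : OnLine lam B₁.1 := (Finset.mem_filter.mp B₁.2).2
  have hB2lam : OnLine lam B₂.1 := (Finset.mem_filter.mp B₂.2).2
  have hBne' : B₁.1 ≠ B₂.1 := fun hcon => hBne (Subtype.ext hcon)
  have hsame : SameLine (f i) lam :=
    sameLine_of_two (hflin i) hlam.1 hBne' hfi1 hfi2 hB1lam hB2lam
  -- the value of the removed factor at A is nonzero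
  have hc0 : evalPt (f i) A ≠ 0 := by
    intro hcon
    have h1 := hf1
    rw [evalPt_prod, Fin.prod_univ_succAbove (fun j => evalPt (f j) A) i, hcon] at h1
    simp at h1
  set c := evalPt (f i) A with hc
  -- the product of the remaining factors
  have hprodA : c * ∏ j : Fin m, evalPt (f (i.succAbove j)) A = 1 := by
    have h1 := hf1
    rw [evalPt_prod, Fin.prod_univ_succAbove (fun j => evalPt (f j) A) i] at h1
    exact h1
  have hprodB : ∀ B ∈ X', B ≠ A → ∏ j : Fin m, evalPt (f (i.succAbove j)) B = 0 := by
    intro B hB hBA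
    have hBX : B ∈ X := (Finset.mem_filter.mp hB).1
    have hBlam : ¬ OnLine lam B := (Finset.mem_filter.mp hB).2
    have hfiB : evalPt (f i) B ≠ 0 := by
      intro hcon
      exact hBlam ((hsame B).mp hcon)
    have h0 := hf0 B hBX hBA
    rw [evalPt_prod, Fin.prod_univ_succAbove (fun j => evalPt (f j) B) i] at h0
    rcases mul_eq_zero.mp h0 with h | h
    · exact absurd h hfiB
    · exact h
  cases m with
  | zero =>
    refine ⟨Fin.elim0, fun j => j.elim0, ?_, ?_, ?_⟩
    · show (1 : MvPolynomial (Fin 2) ℝ).totalDegree ≤ 0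
      simp
    · show evalPt 1 A = 1
      simp [evalPt]
    · intro B hB hBA
      exfalso
      have hc1 : X'.card = 1 := by rw [hcardX']
      exact hBA (Finset.card_le_one.mp (le_of_eq hc1) B hB A hA)
  | succ m' =>
    refine ⟨fun j => if j = 0 then c • f (i.succAbove j) else f (i.succAbove j), ?_, ?_, ?_, ?_⟩
    · intro j
      simp only []
      by_cases hj : j = 0
      · rw [if_pos hj]; exact isLinearPoly_smul hc0 (hflin _)
      · rw [if_neg hj]; exact hflin _
    · simp only []
      refine le_trans (MvPolynomial.totalDegree_finset_prod _ _) ?_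
      have : ∀ j : Fin (m' + 1),
          ((if j = 0 then c • f (i.succAbove j) else f (i.succAbove j)).totalDegree) = 1 := by
        intro j
        by_cases hj : j = 0
        · rw [if_pos hj]; exact isLinearPoly_smul hc0 (hflin _)
        · rw [if_neg hj]; exact hflin _
      calc ∑ j : Fin (m' + 1),
            ((if j = 0 then c • f (i.succAbove j) else f (i.succAbove j)).totalDegree)
          = ∑ _j : Fin (m' + 1), 1 := Finset.sum_congr rfl (fun j _ => this j)
        _ = m' + 1 := by simp
        _ ≤ m' + 1 := le_refl _
    · simp only []
      rw [evalPt_prod, Fin.prod_univ_succ]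
      rw [if_pos rfl]
      rw [evalPt_smul]
      have heq : ∀ j : Fin m',
          evalPt (if j.succ = 0 then c • f (i.succAbove j.succ) else f (i.succAbove j.succ)) A
          = evalPt (f (i.succAbove j.succ)) A := by
        intro j; rw [if_neg (Fin.succ_ne_zero j)]
      rw [Finset.prod_congr rfl (fun j _ => heq j)]
      have := hprodA
      rw [Fin.prod_univ_succ] at this
      linarith [this]
    · intro B hB hBA
      simp only []
      rw [evalPt_prod, Fin.prod_univ_succ, if_pos rfl, evalPt_smul]
      have heq : ∀ j : Fin m',
          evalPt (if j.succ = 0 then c • f (i.succAbove j.succ) else f (i.succAbove j.succ)) B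
          = evalPt (f (i.succAbove j.succ)) B := by
        intro j; rw [if_neg (Fin.succ_ne_zero j)]
      rw [Finset.prod_congr rfl (fun j _ => heq j)]
      have h0 := hprodB B hB hBA
      rw [Fin.prod_univ_succ] at h0
      rw [mul_assoc, h0, mul_zero]

/-- Removing a maximal line from an `(m+1)`-correct set yields an `m`-correct set. -/
lemma remove_maximal_ncorrect {m : ℕ} {X : Finset (ℝ × ℝ)} (hX : NCorrect (m + 1) X)
    {lam : MvPolynomial (Fin 2) ℝ} (hlam : IsMaximalLine (m + 1) X lam) :
    NCorrect m (X.filter (fun A => ¬ OnLine lam A)) := by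
  classical
  set X' := X.filter (fun A => ¬ OnLine lam A) with hX'
  have hcardX : X.card = (m + 3) * (m + 2) / 2 := hX.1
  have hcardS : (X.filter (fun A => OnLine lam A)).card = m + 2 := hlam.2
  have hsplit := Finset.card_filter_add_card_filter_not
    (s := X) (p := fun A => OnLine lam A)
  have hcardX' : X'.card = (m + 2) * (m + 1) / 2 := by
    have h1 := hsplit
    rw [hcardS] at h1
    rw [← hX'] at h1
    have hmul : (m + 3) * (m + 2) = (m + 2) * (m + 1) + 2 * (m + 2) := by ring
    omega
  refine ncorrect_of_vanish hcardX' ?_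
  intro p hdeg hv
  have hdeg2 : (lam * p).totalDegree ≤ m + 1 := by
    refine le_trans (MvPolynomial.totalDegree_mul _ _) ?_
    rw [hlam.1]; omega
  have hzero : lam * p = 0 := by
    apply ncorrect_vanish hX hdeg2
    intro A hA
    rw [evalPt_mul]
    by_cases hon : OnLine lam A
    · rw [hon]; ring
    · rw [hv A (Finset.mem_filter.mpr ⟨hA, hon⟩)]; ring
  rcases mul_eq_zero.mp hzero with h | h
  · exact absurd h (isLinearPoly_ne_zero hlam.1)
  · exact h

/-- P8: two maximal lines of an `(m+1)`-correct set intersect at a node. -/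
lemma maximal_common_node {m : ℕ} {X : Finset (ℝ × ℝ)} (hX : NCorrect (m + 1) X)
    {l₁ l₂ : MvPolynomial (Fin 2) ℝ} (h₁ : IsMaximalLine (m + 1) X l₁)
    (h₂ : IsMaximalLine (m + 1) X l₂) :
    ∃ A ∈ X, OnLine l₁ A ∧ OnLine l₂ A := by
  by_contra hcon
  push_neg at hcon
  have hNC : NCorrect m (X.filter (fun A => ¬ OnLine l₁ A)) :=
    remove_maximal_ncorrect hX h₁
  have hbound := line_nodes_le hNC h₂.1
  rw [Finset.filter_filter] at hbound
  have heq : X.filter (fun A => ¬ OnLine l₁ A ∧ OnLine l₂ A)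
      = X.filter (fun A => OnLine l₂ A) := by
    apply Finset.filter_congr
    intro A hA
    simp only [iff_iff_implies_and_implies]
    constructor
    · intro h; exact h.2
    · intro h
      refine ⟨?_, h⟩
      intro hon1
      exact hcon A hA hon1 h
  rw [heq, h₂.2] at hbound
  omega

/-- P9: a maximal line stays maximal after removing another (different) maximal line. -/
lemma maximal_after_remove {m : ℕ} {X : Finset (ℝ × ℝ)} (hX : NCorrect (m + 1) X)
    {l₁ l₂ : MvPolynomial (Fin 2) ℝ} (h₁ : IsMaximalLine (m + 1) X l₁)
    (h₂ : IsMaximalLine (m + 1) X l₂) (hns : ¬ SameLine l₂ l₁) :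
    IsMaximalLine m (X.filter (fun A => ¬ OnLine l₁ A)) l₂ := by
  classical
  obtain ⟨A, hAX, hA1, hA2⟩ := maximal_common_node hX h₁ h₂
  refine ⟨h₂.1, ?_⟩
  rw [Finset.filter_filter]
  set T := X.filter (fun A => OnLine l₂ A) with hT
  have hTA : T.filter (fun B => OnLine l₁ B) = {A} := by
    apply Finset.ext
    intro B
    simp only [Finset.mem_filter, Finset.mem_singleton, hT]
    constructor
    · rintro ⟨⟨hBX, hB2⟩, hB1⟩
      exact eq_of_two_common h₂.1 h₁.1 hns hB2 hA2 hB1 hA1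
    · rintro rfl
      exact ⟨⟨hAX, hA2⟩, hA1⟩
  have hsplitT := Finset.card_filter_add_card_filter_not
    (s := T) (p := fun B => OnLine l₁ B)
  rw [hTA, Finset.card_singleton] at hsplitT
  have hTcard : T.card = m + 2 := h₂.2
  have heq2 : X.filter (fun A => ¬ OnLine l₁ A ∧ OnLine l₂ A)
      = T.filter (fun B => ¬ OnLine l₁ B) := by
    rw [hT, Finset.filter_filter]
    apply Finset.filter_congr
    intro B _
    simp [and_comm]
  rw [heq2]
  omega

/-- P10: removing a set of pairwise-distinct maximal lines from a GC set. -/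
lemma remove_many (s : ℕ) (R : Finset (MvPolynomial (Fin 2) ℝ)) :
    ∀ (X : Finset (ℝ × ℝ)), GCSet (s + R.card) X →
    (∀ lam ∈ R, IsMaximalLine (s + R.card) X lam) →
    (∀ l₁ ∈ R, ∀ l₂ ∈ R, l₁ ≠ l₂ → ¬ SameLine l₁ l₂) →
    GCSet s (X.filter (fun A => ∀ mu ∈ R, ¬ OnLine mu A)) := by
  classical
  induction R using Finset.induction_on with
  | empty =>
    intro X hX _ _
    simpa using hX
  | @insert a R' ha ih =>
    intro X hX hmax hpair
    have hcard : (insert a R').card = R'.card + 1 := Finset.card_insert_of_notMem ha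
    rw [hcard] at hX hmax
    have haX : IsMaximalLine (s + R'.card + 1) X a := hmax a (Finset.mem_insert_self a R')
    have hX₁ : GCSet (s + R'.card) (X.filter (fun A => ¬ OnLine a A)) := by
      exact remove_maximal (m := s + R'.card) hX haX
    have hmax₁ : ∀ lam ∈ R', IsMaximalLine (s + R'.card)
        (X.filter (fun A => ¬ OnLine a A)) lam := by
      intro lam hlam
      refine maximal_after_remove (m := s + R'.card) hX.1 haX
        (hmax lam (Finset.mem_insert_of_mem hlam)) ?_
      apply hpair lam (Finset.mem_insert_of_mem hlam) a (Finset.mem_insert_self a R')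
      intro hcon; rw [hcon] at hlam; exact ha hlam
    have hpair₁ : ∀ l₁ ∈ R', ∀ l₂ ∈ R', l₁ ≠ l₂ → ¬ SameLine l₁ l₂ := by
      intro l₁ h1 l₂ h2 hne
      exact hpair l₁ (Finset.mem_insert_of_mem h1) l₂ (Finset.mem_insert_of_mem h2) hne
    have hres := ih (X.filter (fun A => ¬ OnLine a A)) hX₁ hmax₁ hpair₁
    have hfilt : (X.filter (fun A => ¬ OnLine a A)).filter
        (fun A => ∀ mu ∈ R', ¬ OnLine mu A)
        = X.filter (fun A => ∀ mu ∈ insert a R', ¬ OnLine mu A) := by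
      rw [Finset.filter_filter]
      apply Finset.filter_congr
      intro A _
      simp [Finset.forall_mem_insert, and_comm]
    rwa [hfilt] at hres

/-- If a non-maximal line `l` passes through exactly `k` `1_m`-nodes of a
`GC_n` set `X`, then the `l`-lowering `X̂(l)` is a `GC_s` set with
`s = def(X) + k - 2`, i.e. `s + #M(X) = n + k`. -/
theorem lowering_is_GC
    (n k s : ℕ) (X : Finset (ℝ × ℝ)) (hX : GCSet n X)
    (L : Finset (MvPolynomial (Fin 2) ℝ)) (hL : MaximalLinesRep n X L)
    (l : MvPolynomial (Fin 2) ℝ) (hl : IsLinearPoly l)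
    (hnotmax : ¬ IsMaximalLine n X l)
    (hk : (X.filter (fun A => OnLine l A ∧ Is1mNode L A)).card = k)
    (hs : s + L.card = n + k) :
    GCSet s (Lowering n X l) := by
  classical
  set R := L.filter (fun lam => IsDisjointMax n X l lam ∨ IsAdjointMax n X l lam) with hR
  -- Step 1 : the lowering is exactly X minus the nodes of the lines in R
  have hlow : Lowering n X l = X.filter (fun A => ∀ mu ∈ R, ¬ OnLine mu A) := by
    unfold Lowering
    apply Finset.filter_congr
    intro A hA
    constructor
    · intro hno mu hmu hon
      have hmu' := Finset.mem_filter.mp hmu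
      exact hno ⟨mu, hmu'.2, hon⟩
    · rintro hall ⟨lam, hprop, hon⟩
      have hmaxlam : IsMaximalLine n X lam := hprop.elim (fun h => h.1) (fun h => h.1)
      obtain ⟨mu, hmuL, hsame⟩ := hL.2.2 lam hmaxlam
      have hmumax : IsMaximalLine n X mu := hL.1 mu hmuL
      have hmuR : mu ∈ R := by
        rw [hR, Finset.mem_filter]
        refine ⟨hmuL, ?_⟩
        rcases hprop with hdisj | hadj
        · left
          refine ⟨hmumax, ?_⟩
          intro B hB hcon
          exact hdisj.2 B hB ⟨(hsame B).mpr hcon.1, hcon.2⟩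
        · right
          obtain ⟨_, lam', hmax', hns, A', hA'X, h1, h2, h3⟩ := hadj
          refine ⟨hmumax, lam', hmax', ?_, A', hA'X, (hsame A').mp h1, h2, h3⟩
          intro hcon
          exact hns (sameLine_trans hsame hcon)
      exact hall mu hmuR ((hsame A).mp hon)
  -- Step 2 : (L \ R).card = k
  have hsub : R ⊆ L := Finset.filter_subset _ _
  have hnotsame : ∀ l₁ ∈ L, ∀ l₂ ∈ L, l₁ ≠ l₂ → ¬ SameLine l₁ l₂ := by
    intro l₁ h1 l₂ h2 hne hcon
    exact hne (hL.2.1 l₁ h1 l₂ h2 hcon)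
  have hlmu_nsame : ∀ mu ∈ L, ¬ SameLine mu l := by
    intro mu hmu hcon
    exact hnotmax (isMaximalLine_congr hcon hl (hL.1 mu hmu))
  -- For each line of L \ R, it is not disjoint so passes through a node of l
  have hnode : ∀ mu ∈ L \ R, ∃ A ∈ X, OnLine mu A ∧ OnLine l A := by
    intro mu hmu
    rw [Finset.mem_sdiff] at hmu
    have hmumax : IsMaximalLine n X mu := hL.1 mu hmu.1
    have hnotR : ¬ (IsDisjointMax n X l mu ∨ IsAdjointMax n X l mu) := by
      intro hcon
      exact hmu.2 (Finset.mem_filter.mpr ⟨hmu.1, hcon⟩)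
    push_neg at hnotR
    have hnd := hnotR.1
    unfold IsDisjointMax at hnd
    push_neg at hnd
    obtain ⟨A, hAX, h1, h2⟩ := hnd hmumax
    exact ⟨A, hAX, h1, h2⟩
  choose nodeOf hnodeX hnodeMu hnodeL using hnode
  -- each such node is a 1_m node
  have hfilt_eq : ∀ (mu : MvPolynomial (Fin 2) ℝ) (hmu : mu ∈ L \ R),
      L.filter (fun lam => OnLine lam (nodeOf mu hmu)) = {mu} := by
    intro mu hmu
    have hmuL : mu ∈ L := (Finset.mem_sdiff.mp hmu).1
    have hnotR : ¬ (IsDisjointMax n X l mu ∨ IsAdjointMax n X l mu) := by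
      intro hcon
      exact (Finset.mem_sdiff.mp hmu).2 (Finset.mem_filter.mpr ⟨hmuL, hcon⟩)
    apply Finset.ext
    intro nu
    simp only [Finset.mem_filter, Finset.mem_singleton]
    constructor
    · rintro ⟨hnuL, hnuon⟩
      by_contra hne
      apply hnotR
      right
      refine ⟨hL.1 mu hmuL, nu, hL.1 nu hnuL, ?_, nodeOf mu hmu, hnodeX mu hmu,
        hnodeMu mu hmu, hnuon, hnodeL mu hmu⟩
      intro hcon
      exact hne (hL.2.1 mu hmuL nu hnuL hcon).symm
    · rintro rfl
      exact ⟨hmuL, hnodeMu nu hmu⟩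
  have hcardLR : (L \ R).card = (X.filter (fun A => OnLine l A ∧ Is1mNode L A)).card := by
    apply Finset.card_bij (fun mu hmu => nodeOf mu hmu)
    · intro mu hmu
      rw [Finset.mem_filter]
      refine ⟨hnodeX mu hmu, hnodeL mu hmu, ?_⟩
      unfold Is1mNode
      rw [hfilt_eq mu hmu, Finset.card_singleton]
    · intro mu₁ hmu₁ mu₂ hmu₂ heq
      have h1 : mu₁ ∈ L.filter (fun lam => OnLine lam (nodeOf mu₂ hmu₂)) := by
        rw [← heq, hfilt_eq mu₁ hmu₁]; exact Finset.mem_singleton_self mu₁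
      rw [hfilt_eq mu₂ hmu₂, Finset.mem_singleton] at h1
      exact h1
    · intro A hA
      rw [Finset.mem_filter] at hA
      obtain ⟨hAX, hAl, hA1m⟩ := hA
      obtain ⟨mu, hmueq⟩ := Finset.card_eq_one.mp hA1m
      have hmuL : mu ∈ L := by
        have : mu ∈ L.filter (fun lam => OnLine lam A) := by
          rw [hmueq]; exact Finset.mem_singleton_self mu
        exact (Finset.mem_filter.mp this).1
      have hmuon : OnLine mu A := by
        have : mu ∈ L.filter (fun lam => OnLine lam A) := by
          rw [hmueq]; exact Finset.mem_singleton_self mu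
        exact (Finset.mem_filter.mp this).2
      have hmuLR : mu ∈ L \ R := by
        rw [Finset.mem_sdiff]
        refine ⟨hmuL, ?_⟩
        intro hmuR
        rcases (Finset.mem_filter.mp hmuR).2 with hdisj | hadj
        · exact hdisj.2 A hAX ⟨hmuon, hAl⟩
        · obtain ⟨_, lam', hmax', hns, B, hBX, hBmu, hBlam', hBl⟩ := hadj
          have hAB : A = B := eq_of_two_common (hL.1 mu hmuL).1 hl
            (hlmu_nsame mu hmuL) hmuon hBmu hAl hBl
          obtain ⟨nu, hnuL, hsame'⟩ := hL.2.2 lam' hmax'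
          have hnuon : OnLine nu A := by
            rw [hAB]
            exact (hsame' B).mp hBlam'
          have : nu ∈ L.filter (fun lam => OnLine lam A) :=
            Finset.mem_filter.mpr ⟨hnuL, hnuon⟩
          rw [hmueq, Finset.mem_singleton] at this
          rw [this] at hsame'
          exact hns (sameLine_symm hsame')
      refine ⟨mu, hmuLR, ?_⟩
      -- the chosen node equals A
      exact (eq_of_two_common (hL.1 mu hmuL).1 hl (hlmu_nsame mu hmuL)
        (hnodeMu mu hmuLR) hmuon (hnodeL mu hmuLR) hAl).symm ▸ rfl
  -- Step 3 : cardinal bookkeeping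
  have hcardk : (L \ R).card = k := by rw [hcardLR, hk]
  have hRcard : s + R.card = n := by
    have h1 : (L \ R).card = L.card - R.card := Finset.card_sdiff_of_subset hsub
    have h2 : R.card ≤ L.card := Finset.card_le_card hsub
    omega
  -- Step 4 : apply the iterated removal lemma
  have hmaxR : ∀ lam ∈ R, IsMaximalLine (s + R.card) X lam := by
    intro lam hlam
    rw [hRcard]
    exact hL.1 lam (hsub hlam)
  have hpairR : ∀ l₁ ∈ R, ∀ l₂ ∈ R, l₁ ≠ l₂ → ¬ SameLine l₁ l₂ := by
    intro l₁ h1 l₂ h2 hne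
    exact hnotsame l₁ (hsub h1) l₂ (hsub h2) hne
  have hXR : GCSet (s + R.card) X := by rw [hRcard]; exact hX
  have := remove_many s R X hXR hmaxR hpairR
  rwa [hlow]
end

section
/- In a generalized principal lattice X of degree n, if ℓ = ℓ_{n−k+1}^r is a k-node line (k ≥ 2, r ∈ {0,1,2}), then the set of nodes using ℓ equals X \ (ℓ_0^r ∪ ℓ_1^r ∪ ⋯ ∪ ℓ_{n−k+1}^r); in particular exactly k(k−1)/2 nodes use ℓ. -/
attribute [local instance] Classical.propDecidable

namespace GPLaux
open MvPolynomial

abbrev MvP := MvPolynomial (Fin 2) ℝ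

noncomputable def sw : MvP →ₐ[ℝ] MvP := rename (Equiv.swap (0 : Fin 2) 1)

lemma sw_sw (p : MvP) : sw (sw p) = p := by
  show rename _ (rename _ p) = p
  rw [rename_rename]
  have : (⇑(Equiv.swap (0 : Fin 2) 1) ∘ ⇑(Equiv.swap (0 : Fin 2) 1)) = id := by
    funext i; simp
  rw [this, rename_id, AlgHom.id_apply]

lemma sw_deg (p : MvP) : (sw p).totalDegree = p.totalDegree := by
  refine le_antisymm (totalDegree_rename_le _ _) ?_
  conv_lhs => rw [← sw_sw p]
  exact totalDegree_rename_le _ _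

lemma sw_ne_zero {p : MvP} (hp : p ≠ 0) : sw p ≠ 0 := by
  intro h
  apply hp
  rw [← sw_sw p, h, map_zero]

lemma evalPt_sw (p : MvP) (u v : ℝ) : evalPt (sw p) (u, v) = evalPt p (v, u) := by
  show MvPolynomial.eval _ (rename _ p) = _
  rw [eval_rename]
  have hfun : (![(u, v).1, (u, v).2] ∘ ⇑(Equiv.swap (0 : Fin 2) 1)) = ![(v, u).1, (v, u).2] := by
    funext i; fin_cases i <;> simp
  rw [hfun]
  rfl

noncomputable def cA (l : MvP) : ℝ := coeff (Finsupp.single 0 1) l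
noncomputable def cB (l : MvP) : ℝ := coeff (Finsupp.single 1 1) l
noncomputable def cC (l : MvP) : ℝ := coeff 0 l

lemma fin2_classify (d : Fin 2 →₀ ℕ) (h : d 0 + d 1 ≤ 1) :
    d = 0 ∨ d = Finsupp.single 0 1 ∨ d = Finsupp.single 1 1 := by
  have h0 : d 0 = 0 ∨ (d 0 = 1 ∧ d 1 = 0) := by omega
  rcases h0 with h0 | ⟨h0, h1⟩
  · have h1 : d 1 = 0 ∨ d 1 = 1 := by omega
    rcases h1 with h1 | h1
    · left; ext i; fin_cases i <;> simp [h0, h1]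
    · right; right; ext i; fin_cases i <;> simp [h0, h1, Finsupp.single_apply]
  · right; left; ext i; fin_cases i <;> simp [h0, h1, Finsupp.single_apply]

lemma support_deg {l : MvP} {d : Fin 2 →₀ ℕ} (hd : d ∈ l.support) :
    d 0 + d 1 ≤ l.totalDegree := by
  have := le_totalDegree hd
  rw [show d.sum (fun _ e => e) = d 0 + d 1 from ?_] at this
  · exact this
  · rw [Finsupp.sum_fintype _ _ (fun _ => rfl), Fin.sum_univ_two]

lemma rep (l : MvP) (h : l.totalDegree ≤ 1) :
    l = C (cA l) * X 0 + C (cB l) * X 1 + C (cC l) := by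
  have hne0 : (Finsupp.single (0 : Fin 2) 1) ≠ 0 := by
    simp [Finsupp.single_eq_zero]
  have hne1 : (Finsupp.single (1 : Fin 2) 1) ≠ 0 := by
    simp [Finsupp.single_eq_zero]
  have hne01 : (Finsupp.single (0 : Fin 2) 1) ≠ Finsupp.single 1 1 := by
    intro hh
    have := DFunLike.congr_fun hh 0
    simp [Finsupp.single_apply] at this
  apply MvPolynomial.ext
  intro d
  rw [coeff_add, coeff_add, coeff_C_mul, coeff_C_mul, coeff_C, coeff_X', coeff_X']
  rcases Classical.em (d = 0) with rfl | hd0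
  · rw [if_neg hne0, if_neg hne1, if_pos rfl]
    simp [cC]
  rcases Classical.em (d = Finsupp.single 0 1) with rfl | hd1
  · rw [if_pos rfl, if_neg hne01.symm, if_neg (by exact fun hh => hne0 hh.symm)]
    simp [cA]
  rcases Classical.em (d = Finsupp.single 1 1) with rfl | hd2
  · rw [if_neg hne01, if_pos rfl, if_neg (by exact fun hh => hne1 hh.symm)]
    simp [cB]
  · rw [if_neg (by exact fun hh => hd1 hh.symm), if_neg (by exact fun hh => hd2 hh.symm),
      if_neg (by exact fun hh => hd0 hh.symm)]
    simp only [mul_zero, add_zero, mul_one, zero_add]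
    by_contra hc
    have hd : d ∈ l.support := by
      rw [mem_support_iff]; exact hc
    have := support_deg hd
    rcases fin2_classify d (this.trans h) with h' | h' | h' <;> tauto

lemma evalPt_linear (l : MvP) (h : l.totalDegree ≤ 1) (P : ℝ × ℝ) :
    evalPt l P = cA l * P.1 + cB l * P.2 + cC l := by
  conv_lhs => rw [rep l h]
  simp [evalPt]

lemma deg_zero_eq_C (l : MvP) (h : l.totalDegree = 0) : l = C (cC l) := by
  have h1 : cA l = 0 := by
    by_contra hc
    have hd : (Finsupp.single (0:Fin 2) 1) ∈ l.support := by rw [mem_support_iff]; exact hc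
    have := support_deg hd
    simp [Finsupp.single_apply, h] at this
  have h2 : cB l = 0 := by
    by_contra hc
    have hd : (Finsupp.single (1:Fin 2) 1) ∈ l.support := by rw [mem_support_iff]; exact hc
    have := support_deg hd
    simp [Finsupp.single_apply, h] at this
  have := rep l (by omega)
  rw [h1, h2] at this
  simpa using this

lemma cAB_ne (l : MvP) (h : l.totalDegree = 1) : cA l ≠ 0 ∨ cB l ≠ 0 := by
  by_contra hc
  push_neg at hc
  have hr := rep l h.le
  rw [hc.1, hc.2] at hr
  simp only [map_zero, zero_mul, zero_add] at hr
  rw [hr, totalDegree_C] at h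
  exact zero_ne_one h


noncomputable def Tm (l : MvP) : MvP →ₐ[ℝ] MvP :=
  aeval ![X 0, (X 1 - C (cC l) - C (cA l) * X 0) * C (cB l)⁻¹]

noncomputable def Sm (l : MvP) : MvP →ₐ[ℝ] MvP :=
  aeval ![X 0, C (cB l) * X 1 + C (cA l) * X 0 + C (cC l)]

lemma Sm_Tm (l : MvP) (hb : cB l ≠ 0) (p : MvP) : Sm l (Tm l p) = p := by
  have h : (Sm l).comp (Tm l) = AlgHom.id ℝ MvP := by
    apply algHom_ext
    intro i
    have hbb : (C (cB l) : MvP) * C (cB l)⁻¹ = 1 := by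
      rw [← C_mul, mul_inv_cancel₀ hb, C_1]
    fin_cases i <;>
      simp [Tm, Sm, AlgHom.comp_apply, map_sub, map_mul, map_add]
    linear_combination (X 1 : MvP) * hbb
  have := DFunLike.congr_fun h p
  simpa using this

lemma Tm_Sm (l : MvP) (hb : cB l ≠ 0) (p : MvP) : Tm l (Sm l p) = p := by
  have h : (Tm l).comp (Sm l) = AlgHom.id ℝ MvP := by
    apply algHom_ext
    intro i
    have hbb : (C (cB l) : MvP) * C (cB l)⁻¹ = 1 := by
      rw [← C_mul, mul_inv_cancel₀ hb, C_1]
    fin_cases i <;>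
      simp [Tm, Sm, AlgHom.comp_apply, map_sub, map_mul, map_add]
    linear_combination ((X 1 : MvP) - C (cC l) - C (cA l) * X 0) * hbb
  have := DFunLike.congr_fun h p
  simpa using this


lemma Tm_l (l : MvP) (h1 : l.totalDegree ≤ 1) (hb : cB l ≠ 0) : Tm l l = X 1 := by
  have hbb : (C (cB l) : MvP) * C (cB l)⁻¹ = 1 := by
    rw [← C_mul, mul_inv_cancel₀ hb, C_1]
  nth_rw 2 [rep l h1]
  simp only [Tm, map_add, map_mul, aeval_X, aeval_C, Matrix.cons_val_zero, Matrix.cons_val_one,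
    Matrix.head_cons, algebraMap_eq]
  linear_combination ((X 1 : MvP) - C (cC l) - C (cA l) * X 0) * hbb

lemma Sm_X1 (l : MvP) (h1 : l.totalDegree ≤ 1) : Sm l (X 1) = l := by
  conv_rhs => rw [rep l h1]
  simp only [Sm, aeval_X, Matrix.cons_val_one, Matrix.head_cons, Matrix.cons_val_zero]
  ring

lemma totalDegree_aeval_le (F : Fin 2 → MvP) (hF : ∀ i, (F i).totalDegree ≤ 1) (p : MvP) :
    (aeval F p).totalDegree ≤ p.totalDegree := by
  conv_lhs => rw [as_sum p, map_sum]
  refine (totalDegree_finset_sum _ _).trans ?_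
  apply Finset.sup_le
  intro d hd
  rw [aeval_monomial]
  refine (totalDegree_mul _ _).trans ?_
  have h1 : (algebraMap ℝ MvP (coeff d p)).totalDegree = 0 := totalDegree_C _
  rw [h1, zero_add]
  refine le_trans ?_ (le_totalDegree hd)
  rw [Finsupp.prod]
  refine (totalDegree_finset_prod _ _).trans ?_
  have : (d.sum fun _ e => e) = ∑ i ∈ d.support, d i := rfl
  rw [this]
  apply Finset.sum_le_sum
  intro i _
  refine (totalDegree_pow _ _).trans ?_
  calc d i * (F i).totalDegree ≤ d i * 1 := Nat.mul_le_mul_left _ (hF i)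
    _ = d i := Nat.mul_one _

lemma natDegree_aeval_le (F : Fin 2 → Polynomial ℝ) (hF : ∀ i, (F i).natDegree ≤ 1) (p : MvP) :
    (aeval F p).natDegree ≤ p.totalDegree := by
  conv_lhs => rw [as_sum p, map_sum]
  refine Polynomial.natDegree_sum_le_of_forall_le _ _ ?_
  intro d hd
  rw [aeval_monomial]
  refine (Polynomial.natDegree_mul_le).trans ?_
  have h1 : (algebraMap ℝ (Polynomial ℝ) (coeff d p)).natDegree = 0 := Polynomial.natDegree_C _
  rw [h1, zero_add]
  refine le_trans ?_ (le_totalDegree hd)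
  rw [Finsupp.prod]
  refine (Polynomial.natDegree_prod_le _ _).trans ?_
  have : (d.sum fun _ e => e) = ∑ i ∈ d.support, d i := rfl
  rw [this]
  apply Finset.sum_le_sum
  intro i _
  refine (Polynomial.natDegree_pow_le).trans ?_
  calc d i * (F i).natDegree ≤ d i * 1 := Nat.mul_le_mul_left _ (hF i)
    _ = d i := Nat.mul_one _

lemma Tm_entries (l : MvP) :
    ∀ i, ((![X 0, (X 1 - C (cC l) - C (cA l) * X 0) * C (cB l)⁻¹] : Fin 2 → MvP) i).totalDegree ≤ 1 := by
  intro i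
  fin_cases i
  · simp [totalDegree_X]
  · simp only [Matrix.cons_val_one, Matrix.head_cons]
    refine (totalDegree_mul _ _).trans ?_
    have h2 : (C (cB l)⁻¹ : MvP).totalDegree = 0 := totalDegree_C _
    rw [h2, add_zero]
    refine (totalDegree_sub _ _).trans ?_
    apply max_le
    · refine (totalDegree_sub _ _).trans ?_
      apply max_le
      · exact le_of_eq (totalDegree_X _)
      · simp [totalDegree_C]
    · refine (totalDegree_mul _ _).trans ?_
      simp [totalDegree_C, totalDegree_X]

lemma Sm_entries (l : MvP) :
    ∀ i, ((![X 0, C (cB l) * X 1 + C (cA l) * X 0 + C (cC l)] : Fin 2 → MvP) i).totalDegree ≤ 1 := by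
  intro i
  fin_cases i
  · simp [totalDegree_X]
  · simp only [Matrix.cons_val_one, Matrix.head_cons]
    refine (totalDegree_add _ _).trans ?_
    apply max_le
    · refine (totalDegree_add _ _).trans ?_
      apply max_le <;>
      · refine (totalDegree_mul _ _).trans ?_
        simp [totalDegree_C, totalDegree_X]
    · simp [totalDegree_C]

lemma Tm_deg (l : MvP) (hb : cB l ≠ 0) (p : MvP) : (Tm l p).totalDegree = p.totalDegree := by
  refine le_antisymm (totalDegree_aeval_le _ (Tm_entries l) p) ?_
  conv_lhs => rw [← Sm_Tm l hb p]
  exact totalDegree_aeval_le _ (Sm_entries l) (Tm l p)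

lemma Tm_ne_zero (l : MvP) (hb : cB l ≠ 0) {p : MvP} (hp : p ≠ 0) : Tm l p ≠ 0 := by
  intro h
  apply hp
  rw [← Sm_Tm l hb p, h, map_zero]

lemma totalDegree_X1_mul (q : MvP) (hq : q ≠ 0) :
    (X 1 * q).totalDegree = q.totalDegree + 1 := by
  have hsupp : (X (1:Fin 2) * q).support = q.support.map (addLeftEmbedding (Finsupp.single 1 1)) :=
    support_X_mul _ _
  unfold totalDegree
  rw [hsupp, Finset.sup_map]
  have hne : q.support.Nonempty := by
    rw [Finset.nonempty_iff_ne_empty]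
    intro h
    exact hq (support_eq_empty.mp h)
  have key : ∀ d : Fin 2 →₀ ℕ,
      ((Finsupp.single (1:Fin 2) 1 + d).sum fun _ e => e) = (d.sum fun _ e => e) + 1 := by
    intro d
    rw [Finsupp.sum_add_index' (fun _ => rfl) (fun _ _ _ => rfl)]
    rw [Finsupp.sum_single_index rfl]
    omega
  obtain ⟨d0, hd0mem, hd0⟩ := Finset.exists_mem_eq_sup q.support hne (fun d => d.sum fun _ e => e)
  apply le_antisymm
  · apply Finset.sup_le
    intro d hd
    simp only [Function.comp_apply, addLeftEmbedding_apply]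
    rw [key d]
    have : (d.sum fun _ e => e) ≤ q.support.sup (fun d => d.sum fun _ e => e) :=
      Finset.le_sup (f := fun d => d.sum fun _ e => e) hd
    omega
  · rw [hd0]
    have h2 : (d0.sum fun _ e => e) + 1 =
        ((fun s : Fin 2 →₀ ℕ => s.sum fun _ e => e) ∘
          (addLeftEmbedding (Finsupp.single (1:Fin 2) 1))) d0 := by
      simp only [Function.comp_apply, addLeftEmbedding_apply]
      rw [key d0]
    rw [h2]
    exact Finset.le_sup hd0mem


noncomputable def pi2 : MvP →ₐ[ℝ] Polynomial ℝ := aeval ![Polynomial.X, 0]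

noncomputable def sub0 : MvP →ₐ[ℝ] MvP := aeval ![X 0, 0]

lemma sub0_eq (e : MvP) : sub0 e = Polynomial.aeval (X (0 : Fin 2) : MvP) (pi2 e) := by
  have h : sub0 = (Polynomial.aeval (X (0 : Fin 2) : MvP)).comp pi2 := by
    apply algHom_ext
    intro i
    fin_cases i <;> simp [sub0, pi2]
  rw [h]; rfl

lemma X1_dvd_sub_sub0 (e : MvP) : (X 1 : MvP) ∣ e - sub0 e := by
  induction e using MvPolynomial.induction_on with
  | C a => simp [sub0, algebraMap_eq]
  | add p q hp hq =>
      have : p + q - sub0 (p + q) = (p - sub0 p) + (q - sub0 q) := by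
        rw [map_add]; ring
      rw [this]; exact dvd_add hp hq
  | mul_X p i hp =>
      fin_cases i
      · show (X 1 : MvP) ∣ p * X 0 - sub0 (p * X 0)
        have : p * X 0 - sub0 (p * X 0) = (p - sub0 p) * X 0 := by
          rw [map_mul]
          have : sub0 (X (0:Fin 2)) = X 0 := by simp [sub0]
          rw [this]; ring
        rw [this]; exact hp.mul_right _
      · show (X 1 : MvP) ∣ p * X 1 - sub0 (p * X 1)
        have : p * X 1 - sub0 (p * X 1) = p * X 1 := by
          rw [map_mul]
          have : sub0 (X (1:Fin 2)) = 0 := by simp [sub0]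
          rw [this]; ring
        rw [this]; exact dvd_mul_left _ _

lemma X1_dvd_of_pi2 {e : MvP} (h : pi2 e = 0) : (X 1 : MvP) ∣ e := by
  have := X1_dvd_sub_sub0 e
  rwa [sub0_eq, h, map_zero, sub_zero] at this

lemma pi2_X1 : pi2 (X 1 : MvP) = 0 := by simp [pi2]

lemma prime_X1 : Prime (X 1 : MvP) := by
  refine ⟨X_ne_zero (1 : Fin 2), ?_, ?_⟩
  · intro h
    have := h.map pi2
    rw [pi2_X1] at this
    exact not_isUnit_zero this
  · intro a b hab
    have h0 : pi2 a * pi2 b = 0 := by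
      rw [← map_mul]
      obtain ⟨q, hq⟩ := hab
      rw [hq, map_mul, pi2_X1, zero_mul]
    rcases mul_eq_zero.mp h0 with h | h
    · exact Or.inl (X1_dvd_of_pi2 h)
    · exact Or.inr (X1_dvd_of_pi2 h)

lemma prime_linear_b (l : MvP) (hl : IsLinearPoly l) (hb : cB l ≠ 0) : Prime l := by
  have h1 : l.totalDegree ≤ 1 := hl.le
  refine ⟨?_, ?_, ?_⟩
  · intro h
    rw [h] at hl
    simp [IsLinearPoly] at hl
  · intro h
    have := h.map (Tm l)
    rw [Tm_l l h1 hb] at this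
    exact prime_X1.2.1 this
  · intro a b hab
    have h2 : (X 1 : MvP) ∣ Tm l a * Tm l b := by
      rw [← map_mul, ← Tm_l l h1 hb]
      exact map_dvd _ hab
    rcases prime_X1.2.2 _ _ h2 with h | h
    · left
      have := map_dvd (Sm l) h
      rwa [Sm_X1 l h1, Sm_Tm l hb] at this
    · right
      have := map_dvd (Sm l) h
      rwa [Sm_X1 l h1, Sm_Tm l hb] at this

lemma sw_linear {l : MvP} (hl : IsLinearPoly l) : IsLinearPoly (sw l) := by
  unfold IsLinearPoly at *
  rw [sw_deg]; exact hl

lemma cB_sw (l : MvP) : cB (sw l) = cA l := by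
  unfold cA cB sw
  have h : (Finsupp.single (1 : Fin 2) 1) =
      Finsupp.mapDomain (Equiv.swap (0:Fin 2) 1) (Finsupp.single 0 1) := by
    rw [Finsupp.mapDomain_single]
    simp
  rw [h, coeff_rename_mapDomain _ (Equiv.injective _)]

lemma prime_linear (l : MvP) (hl : IsLinearPoly l) : Prime l := by
  rcases Classical.em (cB l = 0) with hb | hb
  · have ha : cA l ≠ 0 := by
      rcases cAB_ne l hl with h | h
      · exact h
      · exact absurd hb h
    have hsw : Prime (sw l) := by
      apply prime_linear_b _ (sw_linear hl)
      rw [cB_sw]; exact ha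
    refine ⟨?_, ?_, ?_⟩
    · intro h; rw [h] at hl; simp [IsLinearPoly] at hl
    · intro h
      exact hsw.2.1 (h.map sw)
    · intro a b hab
      have h2 : sw l ∣ sw a * sw b := by
        rw [← map_mul]; exact map_dvd _ hab
      rcases hsw.2.2 _ _ h2 with h | h
      · left
        have := map_dvd sw h
        rwa [sw_sw, sw_sw] at this
      · right
        have := map_dvd sw h
        rwa [sw_sw, sw_sw] at this
  · exact prime_linear_b l hl hb

lemma totalDegree_mul_linear_b (l q : MvP) (h1 : l.totalDegree ≤ 1) (hb : cB l ≠ 0)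
    (hq : q ≠ 0) : (l * q).totalDegree = q.totalDegree + 1 := by
  have := Tm_deg l hb (l * q)
  rw [map_mul, Tm_l l h1 hb] at this
  rw [← this, totalDegree_X1_mul _ (Tm_ne_zero l hb hq), Tm_deg l hb]

lemma totalDegree_mul_linear (l q : MvP) (hl : IsLinearPoly l) (hq : q ≠ 0) :
    (l * q).totalDegree = q.totalDegree + 1 := by
  rcases Classical.em (cB l = 0) with hb | hb
  · have ha : cA l ≠ 0 := by
      rcases cAB_ne l hl with h | h
      · exact h
      · exact absurd hb h
    have hswl : (sw l).totalDegree ≤ 1 := by rw [sw_deg]; exact hl.le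
    have := totalDegree_mul_linear_b (sw l) (sw q) hswl
      (by rw [cB_sw]; exact ha) (sw_ne_zero hq)
    rw [← map_mul] at this
    rw [← sw_deg (l * q), this, sw_deg]
  · exact totalDegree_mul_linear_b l q hl.le hb hq

lemma linear_dvd_sameLine (l l' : MvP) (hl : IsLinearPoly l) (hl' : IsLinearPoly l')
    (hdvd : l ∣ l') : ∀ P, (evalPt l' P = 0 ↔ evalPt l P = 0) := by
  obtain ⟨u, hu⟩ := hdvd
  have hu0 : u ≠ 0 := by
    intro h
    rw [h, mul_zero] at hu
    rw [hu] at hl'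
    simp [IsLinearPoly] at hl'
  have hdeg : u.totalDegree = 0 := by
    have := totalDegree_mul_linear l u hl hu0
    rw [← hu] at this
    rw [hl'] at this
    omega
  have huC : u = C (cC u) := deg_zero_eq_C u hdeg
  have hγ : cC u ≠ 0 := by
    intro h
    rw [h, map_zero] at huC
    exact hu0 huC
  intro P
  rw [hu, huC]
  show MvPolynomial.eval _ (l * C (cC u)) = 0 ↔ _
  rw [map_mul, eval_C]
  constructor
  · intro h
    rcases mul_eq_zero.mp h with h | h
    · exact h
    · exact absurd h hγ
  · intro h
    show evalPt l P * _ = 0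
    rw [h, zero_mul]

lemma eval_aeval_poly (F : Fin 2 → Polynomial ℝ) (t : ℝ) (e : MvP) :
    Polynomial.eval t (aeval F e) = MvPolynomial.eval (fun i => Polynomial.eval t (F i)) e := by
  induction e using MvPolynomial.induction_on with
  | C a => simp
  | add p q hp hq => simp [hp, hq]
  | mul_X p i hp => simp [hp]

lemma eval_aeval_mv (F : Fin 2 → MvP) (v : Fin 2 → ℝ) (e : MvP) :
    MvPolynomial.eval v (aeval F e) = MvPolynomial.eval (fun i => MvPolynomial.eval v (F i)) e := by
  induction e using MvPolynomial.induction_on with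
  | C a => simp
  | add p q hp hq => rw [map_add, map_add, map_add, hp, hq]
  | mul_X p i hp => rw [map_mul, map_mul, aeval_X, map_mul, hp, eval_X]

lemma linear_dvd_of_roots_b (l : MvP) (hl : IsLinearPoly l) (hb : cB l ≠ 0) (m : ℕ)
    (Sf : Finset (ℝ × ℝ)) (hon : ∀ P ∈ Sf, evalPt l P = 0) (hcard : m < Sf.card)
    (d : MvP) (hdeg : d.totalDegree ≤ m) (hvan : ∀ P ∈ Sf, evalPt d P = 0) : l ∣ d := by
  have h1 : l.totalDegree ≤ 1 := hl.le
  -- second coordinate determined by first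
  have hy : ∀ P ∈ Sf, P.2 = (-(cC l) - cA l * P.1) / cB l := by
    intro P hP
    have := hon P hP
    rw [evalPt_linear l h1 P] at this
    field_simp
    linarith
  -- the x-coordinates
  set ts : Finset ℝ := Sf.image Prod.fst with hts
  have htscard : m < ts.card := by
    rw [hts, Finset.card_image_of_injOn]
    · exact hcard
    · intro P hP Q hQ hPQ
      refine Prod.ext hPQ ?_
      rw [hy P hP, hy Q hQ, hPQ]
  set g : Polynomial ℝ := pi2 (Tm l d) with hg
  have hgdeg : g.natDegree ≤ m := by
    rw [hg]
    refine le_trans (natDegree_aeval_le _ ?_ _) ?_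
    · intro i
      fin_cases i <;> simp
    · rw [Tm_deg l hb]; exact hdeg
  have hgroots : ∀ t ∈ ts, g.eval t = 0 := by
    intro t ht
    obtain ⟨P, hP, rfl⟩ := Finset.mem_image.mp ht
    rw [hg]
    unfold pi2
    rw [eval_aeval_poly]
    unfold Tm
    rw [eval_aeval_mv]
    have hfun : (fun i => MvPolynomial.eval
        (fun i => Polynomial.eval P.1 ((![Polynomial.X, 0] : Fin 2 → Polynomial ℝ) i))
        ((![X 0, (X 1 - C (cC l) - C (cA l) * X 0) * C (cB l)⁻¹] : Fin 2 → MvP) i))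
        = ![P.1, P.2] := by
      funext i
      fin_cases i
      · show MvPolynomial.eval _ (X 0) = P.1
        simp
      · show MvPolynomial.eval _ ((X 1 - C (cC l) - C (cA l) * X 0) * C (cB l)⁻¹) = P.2
        simp only [map_mul, map_sub, eval_X, eval_C]
        rw [hy P hP]
        simp only [Matrix.cons_val_zero, Matrix.cons_val_one, Matrix.head_cons, Polynomial.eval_zero, Polynomial.eval_X, zero_sub]
        field_simp
    rw [hfun]
    exact hvan P hP
  have hg0 : g = 0 := by
    apply Polynomial.eq_zero_of_natDegree_lt_card_of_eval_eq_zero' g ts hgroots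
    omega
  have hX1 : (X 1 : MvP) ∣ Tm l d := X1_dvd_of_pi2 hg0
  obtain ⟨q, hq⟩ := hX1
  have : d = l * Sm l q := by
    have := congrArg (Sm l) hq
    rw [Sm_Tm l hb, map_mul, Sm_X1 l h1] at this
    exact this
  exact ⟨Sm l q, this⟩

lemma linear_dvd_of_roots (l : MvP) (hl : IsLinearPoly l) (m : ℕ)
    (Sf : Finset (ℝ × ℝ)) (hon : ∀ P ∈ Sf, evalPt l P = 0) (hcard : m < Sf.card)
    (d : MvP) (hdeg : d.totalDegree ≤ m) (hvan : ∀ P ∈ Sf, evalPt d P = 0) : l ∣ d := by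
  rcases Classical.em (cB l = 0) with hb | hb
  · have ha : cA l ≠ 0 := by
      rcases cAB_ne l hl with h | h
      · exact h
      · exact absurd hb h
    have hres := linear_dvd_of_roots_b (sw l) (sw_linear hl) (by rw [cB_sw]; exact ha) m
      (Sf.image Prod.swap) ?_ ?_ (sw d) ?_ ?_
    · have := map_dvd sw hres
      rwa [sw_sw, sw_sw] at this
    · intro P hP
      obtain ⟨Q, hQ, rfl⟩ := Finset.mem_image.mp hP
      show evalPt (sw l) (Q.2, Q.1) = 0
      rw [evalPt_sw]
      exact hon _ hQ
    · rw [Finset.card_image_of_injective _ Prod.swap_injective]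
      exact hcard
    · rw [sw_deg]; exact hdeg
    · intro P hP
      obtain ⟨Q, hQ, rfl⟩ := Finset.mem_image.mp hP
      show evalPt (sw d) (Q.2, Q.1) = 0
      rw [evalPt_sw]
      exact hvan _ hQ
  · exact linear_dvd_of_roots_b l hl hb m Sf hon hcard d hdeg hvan

lemma card_filter_lt_le (N b : ℕ) :
    (Finset.univ.filter (fun t : Fin N => (t : ℕ) < b)).card ≤ b := by
  have hsub : (Finset.univ.filter (fun t : Fin N => (t : ℕ) < b)).image Fin.val ⊆
      Finset.range b := by
    intro a ha
    obtain ⟨t, ht, rfl⟩ := Finset.mem_image.mp ha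
    rw [Finset.mem_range]
    exact (Finset.mem_filter.mp ht).2
  calc (Finset.univ.filter (fun t : Fin N => (t : ℕ) < b)).card
      = ((Finset.univ.filter (fun t : Fin N => (t : ℕ) < b)).image Fin.val).card :=
        (Finset.card_image_of_injective _ Fin.val_injective).symm
    _ ≤ (Finset.range b).card := Finset.card_le_card hsub
    _ = b := Finset.card_range b

noncomputable def fp (n : ℕ) (ell : Fin 3 → Fin (n + 1) → MvP) (r : Fin 3) (b : ℕ) : MvP :=
  ∏ t : Fin (n + 1), if (t : ℕ) < b then ell r t else 1

lemma deg_fp (n : ℕ) (ell : Fin 3 → Fin (n + 1) → MvP)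
    (hlin : ∀ r i, IsLinearPoly (ell r i)) (r : Fin 3) (b : ℕ) :
    (fp n ell r b).totalDegree ≤ b := by
  unfold fp
  refine (totalDegree_finset_prod _ _).trans ?_
  calc (∑ t : Fin (n+1), (if (t : ℕ) < b then ell r t else 1).totalDegree)
      ≤ ∑ t : Fin (n+1), (if (t : ℕ) < b then 1 else 0) := by
        apply Finset.sum_le_sum
        intro t _
        rcases Classical.em ((t : ℕ) < b) with h | h
        · rw [if_pos h, if_pos h, hlin r t]
        · rw [if_neg h, if_neg h, totalDegree_one]
    _ = (Finset.univ.filter (fun t : Fin (n+1) => (t : ℕ) < b)).card := by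
        rw [Finset.card_eq_sum_ones, Finset.sum_filter]
    _ ≤ b := card_filter_lt_le _ _

lemma dvd_fp (n : ℕ) (ell : Fin 3 → Fin (n + 1) → MvP) (r : Fin 3) (b : ℕ)
    (t0 : Fin (n + 1)) (h : (t0 : ℕ) < b) : ell r t0 ∣ fp n ell r b := by
  have := Finset.dvd_prod_of_mem
    (fun t : Fin (n+1) => if (t : ℕ) < b then ell r t else 1) (Finset.mem_univ t0)
  rw [if_pos h] at this
  exact this

lemma evalPt_fp (n : ℕ) (ell : Fin 3 → Fin (n + 1) → MvP) (r : Fin 3) (b : ℕ) (P : ℝ × ℝ) :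
    evalPt (fp n ell r b) P = ∏ t : Fin (n + 1), evalPt (if (t : ℕ) < b then ell r t else 1) P := by
  unfold fp evalPt
  rw [map_prod]

noncomputable def p0 (n : ℕ) (ell : Fin 3 → Fin (n + 1) → MvP)
    (i j k : Fin (n + 1)) : MvP :=
  fp n ell 0 i * fp n ell 1 j * fp n ell 2 k

section Lattice

variable {n : ℕ} {X : Finset (ℝ × ℝ)} {ell : Fin 3 → Fin (n + 1) → MvP}
  {x : Fin (n + 1) → Fin (n + 1) → Fin (n + 1) → ℝ × ℝ}

variable (hlin : ∀ r i, IsLinearPoly (ell r i))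
  (hiff : ∀ i j k : Fin (n + 1),
    (∃ P ∈ X, OnLine (ell 0 i) P ∧ OnLine (ell 1 j) P ∧ OnLine (ell 2 k) P) ↔
      (i : ℕ) + j + k = n)
  (hx : ∀ i j k : Fin (n + 1), (i : ℕ) + j + k = n →
    x i j k ∈ X ∧ OnLine (ell 0 i) (x i j k) ∧ OnLine (ell 1 j) (x i j k) ∧
      OnLine (ell 2 k) (x i j k))

include hiff hx

lemma node_inj {i j k i' j' k' : Fin (n + 1)} (h : (i : ℕ) + j + k = n)
    (h' : (i' : ℕ) + j' + k' = n) (heq : x i j k = x i' j' k') :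
    i = i' ∧ j = j' ∧ k = k' := by
  obtain ⟨hm, h0, h1, h2⟩ := hx i j k h
  obtain ⟨hm', h0', h1', h2'⟩ := hx i' j' k' h'
  rw [← heq] at h0' h1' h2'
  have e1 : (i : ℕ) + j' + k' = n := (hiff i j' k').mp ⟨_, hm, h0, h1', h2'⟩
  have e2 : (i : ℕ) + j + k' = n := (hiff i j k').mp ⟨_, hm, h0, h1, h2'⟩
  have e3 : (i' : ℕ) + j + k = n := (hiff i' j k).mp ⟨_, hm, h0', h1, h2⟩
  refine ⟨Fin.ext ?_, Fin.ext ?_, Fin.ext ?_⟩ <;> omega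

lemma on0_iff {i j k t : Fin (n + 1)} (h : (i : ℕ) + j + k = n) :
    OnLine (ell 0 t) (x i j k) ↔ t = i := by
  obtain ⟨hm, h0, h1, h2⟩ := hx i j k h
  constructor
  · intro hOn
    have := (hiff t j k).mp ⟨_, hm, hOn, h1, h2⟩
    apply Fin.ext
    omega
  · rintro rfl
    exact h0

include hlin in
lemma vanish_zero :
    ∀ m, m ≤ n → ∀ d : MvP, d.totalDegree ≤ m →
      (∀ i j k : Fin (n + 1), (i : ℕ) + j + k = n → n - m ≤ (i : ℕ) →
        evalPt d (x i j k) = 0) → d = 0 := by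
  intro m
  induction m with
  | zero =>
      intro hmn d hdeg hvan
      have h0 : d = C (cC d) := deg_zero_eq_C d (Nat.le_zero.mp hdeg)
      have hv := hvan ⟨n, by omega⟩ ⟨0, by omega⟩ ⟨0, by omega⟩ (by simp) (by simp)
      rw [h0] at hv ⊢
      unfold evalPt at hv
      rw [eval_C] at hv
      rw [hv, map_zero]
  | succ m ih =>
      intro hmn d hdeg hvan
      set i0 : Fin (n + 1) := ⟨n - (m + 1), by omega⟩ with hi0
      set f : ℕ → ℝ × ℝ := fun j =>
        x i0 ⟨min j n, by omega⟩ ⟨m + 1 - j, by omega⟩ with hf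
      have hnodesum : ∀ j : ℕ, j < m + 2 →
          (i0 : ℕ) + ((⟨min j n, by omega⟩ : Fin (n + 1)) : ℕ)
            + ((⟨m + 1 - j, by omega⟩ : Fin (n + 1)) : ℕ) = n := by
        intro j hj
        show (n - (m + 1)) + (min j n) + (m + 1 - j) = n
        omega
      set Sf : Finset (ℝ × ℝ) := (Finset.range (m + 2)).image f with hSf
      have hcard : Sf.card = m + 2 := by
        rw [hSf, Finset.card_image_of_injOn, Finset.card_range]
        intro a ha b hb hab
        rw [Finset.mem_coe, Finset.mem_range] at ha hb
        have := node_inj hiff hx (hnodesum a ha) (hnodesum b hb) hab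
        have hval := congrArg Fin.val this.2.1
        simp only at hval
        omega
      have hon : ∀ P ∈ Sf, evalPt (ell 0 i0) P = 0 := by
        intro P hP
        obtain ⟨j, hj, rfl⟩ := Finset.mem_image.mp hP
        rw [Finset.mem_range] at hj
        exact (hx _ _ _ (hnodesum j hj)).2.1
      have hvanS : ∀ P ∈ Sf, evalPt d P = 0 := by
        intro P hP
        obtain ⟨j, hj, rfl⟩ := Finset.mem_image.mp hP
        rw [Finset.mem_range] at hj
        refine hvan _ _ _ (hnodesum j hj) ?_
        show n - (m + 1) ≤ n - (m + 1)
        exact le_refl _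
      obtain ⟨q, hq⟩ := linear_dvd_of_roots (ell 0 i0) (hlin 0 i0) (m + 1) Sf hon
        (by omega) d hdeg hvanS
      rcases Classical.em (q = 0) with hq0 | hq0
      · rw [hq, hq0, mul_zero]
      have hdq : q.totalDegree ≤ m := by
        have := totalDegree_mul_linear (ell 0 i0) q (hlin 0 i0) hq0
        rw [← hq] at this
        omega
      have hqvan : ∀ i j k : Fin (n + 1), (i : ℕ) + j + k = n → n - m ≤ (i : ℕ) →
          evalPt q (x i j k) = 0 := by
        intro i j k hsum hge
        have hd := hvan i j k hsum (by omega)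
        rw [hq] at hd
        unfold evalPt at hd
        rw [map_mul] at hd
        have hl0 : MvPolynomial.eval ![(x i j k).1, (x i j k).2] (ell 0 i0) ≠ 0 := by
          intro h0
          have : i0 = i := (on0_iff hiff hx hsum).mp h0
          have hval := congrArg Fin.val this
          rw [hi0] at hval
          simp only at hval
          omega
        rcases mul_eq_zero.mp hd with h | h
        · exact absurd h hl0
        · exact h
      have : q = 0 := ih (by omega) q hdq hqvan
      exact absurd this hq0

lemma on1_iff {i j k t : Fin (n + 1)} (h : (i : ℕ) + j + k = n) :
    OnLine (ell 1 t) (x i j k) ↔ t = j := by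
  obtain ⟨hm, h0, h1, h2⟩ := hx i j k h
  constructor
  · intro hOn
    have := (hiff i t k).mp ⟨_, hm, h0, hOn, h2⟩
    apply Fin.ext
    omega
  · rintro rfl
    exact h1

lemma on2_iff {i j k t : Fin (n + 1)} (h : (i : ℕ) + j + k = n) :
    OnLine (ell 2 t) (x i j k) ↔ t = k := by
  obtain ⟨hm, h0, h1, h2⟩ := hx i j k h
  constructor
  · intro hOn
    have := (hiff i j t).mp ⟨_, hm, h0, h1, hOn⟩
    apply Fin.ext
    omega
  · rintro rfl
    exact h2

include hlin in
lemma p0_deg {i j k : Fin (n + 1)} (h : (i : ℕ) + j + k = n) :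
    (p0 n ell i j k).totalDegree ≤ n := by
  unfold p0
  refine (totalDegree_mul _ _).trans ?_
  have h2 := (totalDegree_mul (fp n ell 0 i) (fp n ell 1 j))
  have d0 := deg_fp n ell hlin 0 i
  have d1 := deg_fp n ell hlin 1 j
  have d2 := deg_fp n ell hlin 2 k
  omega

lemma p0_eval_ne {i j k : Fin (n + 1)} (h : (i : ℕ) + j + k = n) :
    evalPt (p0 n ell i j k) (x i j k) ≠ 0 := by
  unfold p0 evalPt
  rw [map_mul, map_mul]
  have key : ∀ (r : Fin 3) (b : ℕ),
      (∀ t : Fin (n+1), (t : ℕ) < b → ¬ OnLine (ell r t) (x i j k)) →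
      MvPolynomial.eval ![(x i j k).1, (x i j k).2] (fp n ell r b) ≠ 0 := by
    intro r b hno
    unfold fp
    rw [map_prod]
    rw [Finset.prod_ne_zero_iff]
    intro t _
    rcases Classical.em ((t : ℕ) < b) with hlt | hlt
    · rw [if_pos hlt]
      exact hno t hlt
    · rw [if_neg hlt, map_one]
      exact one_ne_zero
  have k0 := key 0 i (fun t ht hOn => by
    have := (on0_iff hiff hx h).mp hOn
    rw [this] at ht
    omega)
  have k1 := key 1 j (fun t ht hOn => by
    have := (on1_iff hiff hx h).mp hOn
    rw [this] at ht
    omega)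
  have k2 := key 2 k (fun t ht hOn => by
    have := (on2_iff hiff hx h).mp hOn
    rw [this] at ht
    omega)
  exact mul_ne_zero (mul_ne_zero k0 k1) k2

lemma p0_vanish {i j k i' j' k' : Fin (n + 1)} (h : (i : ℕ) + j + k = n)
    (h' : (i' : ℕ) + j' + k' = n) (hne : x i' j' k' ≠ x i j k) :
    evalPt (p0 n ell i j k) (x i' j' k') = 0 := by
  have htriple : (i' : ℕ) < i ∨ (j' : ℕ) < j ∨ (k' : ℕ) < k := by
    by_contra hc
    push_neg at hc
    apply hne
    have : (i' : ℕ) = i ∧ (j' : ℕ) = j ∧ (k' : ℕ) = k := by omega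
    rw [show i' = i from Fin.ext this.1, show j' = j from Fin.ext this.2.1,
      show k' = k from Fin.ext this.2.2]
  have key : ∀ (r : Fin 3) (b : ℕ) (t0 : Fin (n+1)), (t0 : ℕ) < b →
      OnLine (ell r t0) (x i' j' k') →
      MvPolynomial.eval ![(x i' j' k').1, (x i' j' k').2] (fp n ell r b) = 0 := by
    intro r b t0 hlt hOn
    unfold fp
    rw [map_prod]
    apply Finset.prod_eq_zero (Finset.mem_univ t0)
    rw [if_pos hlt]
    exact hOn
  obtain ⟨hm', h0', h1', h2'⟩ := hx i' j' k' h'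
  unfold p0 evalPt
  rw [map_mul, map_mul]
  rcases htriple with hlt | hlt | hlt
  · rw [key 0 i i' hlt h0']
    ring
  · rw [key 1 j j' hlt h1']
    ring
  · rw [key 2 k k' hlt h2']
    ring

include hlin in
lemma p0_fund {i j k : Fin (n + 1)} (h : (i : ℕ) + j + k = n)
    (hXeq : ∀ P ∈ X, ∃ i j k : Fin (n + 1), (i : ℕ) + j + k = n ∧ P = x i j k) :
    IsFundamental n X (x i j k)
      (C (evalPt (p0 n ell i j k) (x i j k))⁻¹ * p0 n ell i j k) := by
  set e := evalPt (p0 n ell i j k) (x i j k) with he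
  have hne : e ≠ 0 := p0_eval_ne hiff hx h
  refine ⟨?_, ?_, ?_⟩
  · refine (totalDegree_mul _ _).trans ?_
    rw [totalDegree_C]
    rw [zero_add]
    exact p0_deg hlin hiff hx h
  · unfold evalPt
    rw [map_mul, eval_C]
    show e⁻¹ * e = 1
    exact inv_mul_cancel₀ hne
  · intro B hB hBne
    obtain ⟨i', j', k', h', rfl⟩ := hXeq B hB
    unfold evalPt
    rw [map_mul, eval_C]
    have := p0_vanish hiff hx h h' hBne
    unfold evalPt at this
    rw [this, mul_zero]

include hlin in
lemma fund_unique {A : ℝ × ℝ}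
    (hXmem : ∀ i j k : Fin (n + 1), (i : ℕ) + j + k = n → x i j k ∈ X)
    {q1 q2 : MvP} (h1 : IsFundamental n X A q1) (h2 : IsFundamental n X A q2) : q1 = q2 := by
  have hvan : ∀ i j k : Fin (n + 1), (i : ℕ) + j + k = n → n - n ≤ (i : ℕ) →
      evalPt (q1 - q2) (x i j k) = 0 := by
    intro i j k hsum _
    unfold evalPt
    rw [map_sub]
    rcases Classical.em (x i j k = A) with hA | hA
    · rw [hA]
      have e1 := h1.2.1
      have e2 := h2.2.1
      unfold evalPt at e1 e2
      rw [e1, e2, sub_self]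
    · have e1 := h1.2.2 _ (hXmem i j k hsum) hA
      have e2 := h2.2.2 _ (hXmem i j k hsum) hA
      unfold evalPt at e1 e2
      rw [e1, e2, sub_self]
  have hdeg : (q1 - q2).totalDegree ≤ n := by
    refine (totalDegree_sub _ _).trans ?_
    exact max_le h1.1 h2.1
  have := vanish_zero hlin hiff hx n (le_refl n) (q1 - q2) hdeg hvan
  exact sub_eq_zero.mp this


omit hiff hx in
lemma sum_sub_range (m : ℕ) : ∑ u ∈ Finset.range m, (m - u) = m * (m + 1) / 2 := by
  induction m with
  | zero => simp
  | succ m ih =>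
      rw [Finset.sum_range_succ]
      have hcg : ∀ u ∈ Finset.range m, m + 1 - u = (m - u) + 1 := by
        intro u hu
        rw [Finset.mem_range] at hu
        omega
      rw [Finset.sum_congr rfl hcg, Finset.sum_add_distrib, ih, Finset.sum_const,
        Finset.card_range]
      have h2 : (m + 1) * (m + 1 + 1) = m * (m + 1) + 2 * (m + 1) := by ring
      obtain ⟨c, hc⟩ := Nat.even_mul_succ_self m
      simp only [smul_eq_mul, mul_one]
      omega

include hlin in
lemma main0
    (hdist : ∀ r i r' i', (r, i) ≠ (r', i') → ¬ SameLine (ell r i) (ell r' i'))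
    (hXeq : ∀ P ∈ X, ∃ i j k : Fin (n + 1), (i : ℕ) + j + k = n ∧ P = x i j k)
    (k s : ℕ) (hk2 : 2 ≤ k) (hs : s + k = n + 1) :
    UsedSet n X (ell 0 ⟨s, by linarith⟩) =
      X.filter (fun A => ∀ t : Fin (n + 1), (t : ℕ) ≤ s → ¬ OnLine (ell 0 t) A) ∧
    (UsedSet n X (ell 0 ⟨s, by linarith⟩)).card = k * (k - 1) / 2 := by
  have hsn : s < n + 1 := by omega
  set s' : Fin (n + 1) := ⟨s, hsn⟩ with hs'
  set L : MvP := ell 0 s' with hL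
  have hXmem : ∀ i j k : Fin (n + 1), (i : ℕ) + j + k = n → x i j k ∈ X :=
    fun i j k h => (hx i j k h).1
  -- the set equality
  have hset : UsedSet n X L =
      X.filter (fun A => ∀ t : Fin (n + 1), (t : ℕ) ≤ s → ¬ OnLine (ell 0 t) A) := by
    apply Finset.ext
    intro A
    unfold UsedSet
    rw [Finset.mem_filter, Finset.mem_filter]
    constructor
    · rintro ⟨hAX, q, hqf, hqd⟩
      refine ⟨hAX, ?_⟩
      obtain ⟨i, j, k', hsum, rfl⟩ := hXeq A hAX
      set e := evalPt (p0 n ell i j k') (x i j k') with he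
      have hne : e ≠ 0 := p0_eval_ne hiff hx hsum
      have hqp : q = C e⁻¹ * p0 n ell i j k' :=
        fund_unique hlin hiff hx hXmem hqf (p0_fund hlin hiff hx hsum hXeq)
      have hLp0 : L ∣ p0 n ell i j k' := by
        have h1 : L ∣ C e * (C e⁻¹ * p0 n ell i j k') := by
          rw [hqp] at hqd
          exact hqd.mul_left _
        have h2 : C e * (C e⁻¹ * p0 n ell i j k') = p0 n ell i j k' := by
          rw [← mul_assoc, ← C_mul, mul_inv_cancel₀ hne, C_1, one_mul]
        rwa [h2] at h1
      have hprime : Prime L := prime_linear _ (hlin 0 s')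
      -- L divides one of the linear factors
      have hfac : ∃ (r' : Fin 3) (t0 : Fin (n + 1)) (b : ℕ),
          ((r' = 0 ∧ b = (i : ℕ)) ∨ (r' = 1 ∧ b = (j : ℕ)) ∨ (r' = 2 ∧ b = (k' : ℕ))) ∧
          (t0 : ℕ) < b ∧ L ∣ ell r' t0 := by
        unfold p0 at hLp0
        rcases hprime.2.2 _ _ hLp0 with hdf | hdf
        · rcases hprime.2.2 _ _ hdf with hdf' | hdf'
          · obtain ⟨t0, _, hdvd⟩ := (hprime.dvd_finset_prod_iff _).mp hdf'
            rcases Classical.em ((t0 : ℕ) < (i : ℕ)) with hlt | hlt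
            · rw [if_pos hlt] at hdvd
              exact ⟨0, t0, i, Or.inl ⟨rfl, rfl⟩, hlt, hdvd⟩
            · rw [if_neg hlt] at hdvd
              exact absurd (isUnit_of_dvd_one hdvd) hprime.2.1
          · obtain ⟨t0, _, hdvd⟩ := (hprime.dvd_finset_prod_iff _).mp hdf'
            rcases Classical.em ((t0 : ℕ) < (j : ℕ)) with hlt | hlt
            · rw [if_pos hlt] at hdvd
              exact ⟨1, t0, j, Or.inr (Or.inl ⟨rfl, rfl⟩), hlt, hdvd⟩
            · rw [if_neg hlt] at hdvd
              exact absurd (isUnit_of_dvd_one hdvd) hprime.2.1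
        · obtain ⟨t0, _, hdvd⟩ := (hprime.dvd_finset_prod_iff _).mp hdf
          rcases Classical.em ((t0 : ℕ) < (k' : ℕ)) with hlt | hlt
          · rw [if_pos hlt] at hdvd
            exact ⟨2, t0, k', Or.inr (Or.inr ⟨rfl, rfl⟩), hlt, hdvd⟩
          · rw [if_neg hlt] at hdvd
            exact absurd (isUnit_of_dvd_one hdvd) hprime.2.1
      obtain ⟨r', t0, b, hcase, hlt, hdvd⟩ := hfac
      have hsame : SameLine (ell r' t0) L := by
        intro P
        exact linear_dvd_sameLine L (ell r' t0) (hlin 0 s') (hlin r' t0) hdvd P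
      have heqpair : (r', t0) = ((0 : Fin 3), s') := by
        by_contra hne'
        exact hdist r' t0 0 s' hne' hsame
      have hr0 : r' = 0 := congrArg Prod.fst heqpair
      have ht0 : t0 = s' := congrArg Prod.snd heqpair
      have hsi : s < (i : ℕ) := by
        rcases hcase with ⟨_, rfl⟩ | ⟨hr1, _⟩ | ⟨hr2, _⟩
        · rw [ht0] at hlt
          exact hlt
        · rw [hr0] at hr1
          exact absurd hr1 (by decide)
        · rw [hr0] at hr2
          exact absurd hr2 (by decide)
      intro t ht hOn
      have := (on0_iff hiff hx hsum).mp hOn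
      rw [this] at ht
      omega
    · rintro ⟨hAX, hcond⟩
      refine ⟨hAX, ?_⟩
      obtain ⟨i, j, k', hsum, rfl⟩ := hXeq A hAX
      have hsi : s < (i : ℕ) := by
        by_contra hc
        push_neg at hc
        exact hcond i hc (hx i j k' hsum).2.1
      set e := evalPt (p0 n ell i j k') (x i j k') with he
      refine ⟨C e⁻¹ * p0 n ell i j k', p0_fund hlin hiff hx hsum hXeq, ?_⟩
      have h1 : L ∣ fp n ell 0 i := dvd_fp n ell 0 i s' hsi
      have h2 : fp n ell 0 i ∣ p0 n ell i j k' := by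
        unfold p0
        exact (dvd_mul_right _ _).mul_right _
      exact (h1.trans h2).mul_left _
  refine ⟨hset, ?_⟩
  -- cardinality
  rw [hset]
  have hk1n : k - 1 + s = n := by omega
  set T : Finset (ℕ × ℕ) := (Finset.range (k - 1)).biUnion
    (fun u => (Finset.range (k - 1 - u)).image (fun j => (u, j))) with hT
  have hmemT : ∀ uj : ℕ × ℕ, uj ∈ T ↔ uj.1 < k - 1 ∧ uj.2 < k - 1 - uj.1 := by
    intro uj
    rw [hT, Finset.mem_biUnion]
    constructor
    · rintro ⟨u, hu, huj⟩
      obtain ⟨j, hj, rfl⟩ := Finset.mem_image.mp huj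
      rw [Finset.mem_range] at hu hj
      exact ⟨hu, hj⟩
    · rintro ⟨h1, h2⟩
      exact ⟨uj.1, Finset.mem_range.mpr h1,
        Finset.mem_image.mpr ⟨uj.2, Finset.mem_range.mpr h2, rfl⟩⟩
  set G : ℕ × ℕ → ℝ × ℝ := fun uj =>
    x ⟨min (s + 1 + uj.1) n, by omega⟩ ⟨min uj.2 n, by omega⟩
      ⟨n - (s + 1 + uj.1) - uj.2, by omega⟩ with hG
  have hGsum : ∀ uj : ℕ × ℕ, uj.1 < k - 1 → uj.2 < k - 1 - uj.1 →
      ((⟨min (s + 1 + uj.1) n, by omega⟩ : Fin (n + 1)) : ℕ)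
        + ((⟨min uj.2 n, by omega⟩ : Fin (n + 1)) : ℕ)
        + ((⟨n - (s + 1 + uj.1) - uj.2, by omega⟩ : Fin (n + 1)) : ℕ) = n := by
    intro uj h1 h2
    show min (s + 1 + uj.1) n + min uj.2 n + (n - (s + 1 + uj.1) - uj.2) = n
    omega
  have himg : X.filter (fun A => ∀ t : Fin (n + 1), (t : ℕ) ≤ s → ¬ OnLine (ell 0 t) A)
      = T.image G := by
    apply Finset.ext
    intro A
    rw [Finset.mem_filter, Finset.mem_image]
    constructor
    · rintro ⟨hAX, hcond⟩
      obtain ⟨i, j, k', hsum, rfl⟩ := hXeq A hAX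
      have hsi : s < (i : ℕ) := by
        by_contra hc
        push_neg at hc
        exact hcond i hc (hx i j k' hsum).2.1
      refine ⟨((i : ℕ) - s - 1, (j : ℕ)), ?_, ?_⟩
      · rw [hmemT]
        constructor
        · show (i : ℕ) - s - 1 < k - 1
          omega
        · show (j : ℕ) < k - 1 - ((i : ℕ) - s - 1)
          omega
      · rw [hG]
        dsimp only
        have e1 : (⟨min (s + 1 + ((i : ℕ) - s - 1)) n, by omega⟩ : Fin (n + 1)) = i := by
          apply Fin.ext
          show min (s + 1 + ((i : ℕ) - s - 1)) n = (i : ℕ)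
          omega
        have e2 : (⟨min (j : ℕ) n, by omega⟩ : Fin (n + 1)) = j := by
          apply Fin.ext
          show min (j : ℕ) n = (j : ℕ)
          omega
        have e3 : (⟨n - (s + 1 + ((i : ℕ) - s - 1)) - (j : ℕ), by omega⟩ : Fin (n + 1)) = k' := by
          apply Fin.ext
          show n - (s + 1 + ((i : ℕ) - s - 1)) - (j : ℕ) = (k' : ℕ)
          omega
        rw [e1, e2, e3]
    · rintro ⟨uj, hujT, rfl⟩
      rw [hmemT] at hujT
      have hsum := hGsum uj hujT.1 hujT.2
      refine ⟨hXmem _ _ _ hsum, ?_⟩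
      intro t ht hOn
      have := (on0_iff hiff hx hsum).mp hOn
      have hval := congrArg Fin.val this
      simp only at hval
      omega
  rw [himg]
  rw [Finset.card_image_of_injOn]
  · rw [hT, Finset.card_biUnion]
    · have hcardsum : ∀ u ∈ Finset.range (k - 1),
          ((Finset.range (k - 1 - u)).image (fun j => (u, j))).card = k - 1 - u := by
        intro u _
        rw [Finset.card_image_of_injective, Finset.card_range]
        intro a b hab
        exact congrArg Prod.snd hab
      rw [Finset.sum_congr rfl hcardsum, sum_sub_range]
      have hk1 : k - 1 + 1 = k := by omega
      rw [hk1, Nat.mul_comm]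
    · intro u1 hu1 u2 hu2 hne
      apply Finset.disjoint_left.mpr
      intro a ha1 ha2
      obtain ⟨j1, _, rfl⟩ := Finset.mem_image.mp ha1
      obtain ⟨j2, _, heq⟩ := Finset.mem_image.mp ha2
      exact hne (congrArg Prod.fst heq).symm
  · intro uj1 h1 uj2 h2 heq
    rw [Finset.mem_coe, hmemT] at h1 h2
    have hsum1 := hGsum uj1 h1.1 h1.2
    have hsum2 := hGsum uj2 h2.1 h2.2
    have := node_inj hiff hx hsum1 hsum2 heq
    have hv1 := congrArg Fin.val this.1
    have hv2 := congrArg Fin.val this.2.1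
    simp only at hv1 hv2
    have : uj1.1 = uj2.1 ∧ uj1.2 = uj2.2 := by omega
    exact Prod.ext this.1 this.2

end Lattice

end GPLaux

/-- In a generalized principal lattice of degree `n`, if
`ℓ = ℓ_{n-k+1}^r` is a `k`-node line (`k ≥ 2`), then
`Xˡ = X \ (ℓ_0^r ∪ ⋯ ∪ ℓ_{n-k+1}^r)`, and exactly `k(k-1)/2` nodes use `ℓ`. -/
theorem GPL_used_set
    (n : ℕ) (X : Finset (ℝ × ℝ))
    (ell : Fin 3 → Fin (n + 1) → MvPolynomial (Fin 2) ℝ)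
    (hlin : ∀ r i, IsLinearPoly (ell r i))
    (hdist : ∀ r i r' i', (r, i) ≠ (r', i') → ¬ SameLine (ell r i) (ell r' i'))
    (hiff : ∀ i j k : Fin (n + 1),
      (∃ P ∈ X, OnLine (ell 0 i) P ∧ OnLine (ell 1 j) P ∧ OnLine (ell 2 k) P) ↔
        (i : ℕ) + j + k = n)
    (x : Fin (n + 1) → Fin (n + 1) → Fin (n + 1) → ℝ × ℝ)
    (hx : ∀ i j k : Fin (n + 1), (i : ℕ) + j + k = n →
      x i j k ∈ X ∧ OnLine (ell 0 i) (x i j k) ∧ OnLine (ell 1 j) (x i j k) ∧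
        OnLine (ell 2 k) (x i j k))
    (hXeq : ∀ P ∈ X, ∃ i j k : Fin (n + 1), (i : ℕ) + j + k = n ∧ P = x i j k)
    (r : Fin 3) (k s : ℕ) (hk2 : 2 ≤ k) (hs : s + k = n + 1)
    (hknode : (X.filter (fun A => OnLine (ell r ⟨s, by omega⟩) A)).card = k) :
    UsedSet n X (ell r ⟨s, by omega⟩) =
      X.filter (fun A => ∀ t : Fin (n + 1), (t : ℕ) ≤ s → ¬ OnLine (ell r t) A) ∧
    (UsedSet n X (ell r ⟨s, by omega⟩)).card = k * (k - 1) / 2 := by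
  fin_cases r
  · exact GPLaux.main0 hlin hiff hx hdist hXeq k s hk2 hs
  · -- r = 1 : rotate the families by the permutation (1, 2, 0)
    refine GPLaux.main0 (ell := ![ell 1, ell 2, ell 0]) (x := fun i j k => x k i j)
      ?_ ?_ ?_ ?_ ?_ k s hk2 hs
    · intro a i
      fin_cases a
      · exact hlin 1 i
      · exact hlin 2 i
      · exact hlin 0 i
    · intro i j k
      constructor
      · rintro ⟨P, hP, h1, h2, h0⟩
        have := (hiff k i j).mp ⟨P, hP, h0, h1, h2⟩
        omega
      · intro hsum
        obtain ⟨P, hP, h0, h1, h2⟩ := (hiff k i j).mpr (by omega)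
        exact ⟨P, hP, h1, h2, h0⟩
    · intro i j k hsum
      obtain ⟨hm, h0, h1, h2⟩ := hx k i j (by omega)
      exact ⟨hm, h1, h2, h0⟩
    · intro a i b i' hne
      fin_cases a <;> fin_cases b
      · exact hdist 1 i 1 i' (fun h => hne (by rw [show i = i' from congrArg Prod.snd h]))
      · exact hdist 1 i 2 i' (fun h => absurd (congrArg Prod.fst h) (by decide : ¬((1 : Fin 3) = 2)))
      · exact hdist 1 i 0 i' (fun h => absurd (congrArg Prod.fst h) (by decide : ¬((1 : Fin 3) = 0)))
      · exact hdist 2 i 1 i' (fun h => absurd (congrArg Prod.fst h) (by decide : ¬((2 : Fin 3) = 1)))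
      · exact hdist 2 i 2 i' (fun h => hne (by rw [show i = i' from congrArg Prod.snd h]))
      · exact hdist 2 i 0 i' (fun h => absurd (congrArg Prod.fst h) (by decide : ¬((2 : Fin 3) = 0)))
      · exact hdist 0 i 1 i' (fun h => absurd (congrArg Prod.fst h) (by decide : ¬((0 : Fin 3) = 1)))
      · exact hdist 0 i 2 i' (fun h => absurd (congrArg Prod.fst h) (by decide : ¬((0 : Fin 3) = 2)))
      · exact hdist 0 i 0 i' (fun h => hne (by rw [show i = i' from congrArg Prod.snd h]))
    · intro P hP
      obtain ⟨i0, j0, k0, hsum, hPeq⟩ := hXeq P hP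
      exact ⟨j0, k0, i0, by omega, hPeq⟩
  · -- r = 2 : rotate the families by the permutation (2, 0, 1)
    refine GPLaux.main0 (ell := ![ell 2, ell 0, ell 1]) (x := fun i j k => x j k i)
      ?_ ?_ ?_ ?_ ?_ k s hk2 hs
    · intro a i
      fin_cases a
      · exact hlin 2 i
      · exact hlin 0 i
      · exact hlin 1 i
    · intro i j k
      constructor
      · rintro ⟨P, hP, h2, h0, h1⟩
        have := (hiff j k i).mp ⟨P, hP, h0, h1, h2⟩
        omega
      · intro hsum
        obtain ⟨P, hP, h0, h1, h2⟩ := (hiff j k i).mpr (by omega)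
        exact ⟨P, hP, h2, h0, h1⟩
    · intro i j k hsum
      obtain ⟨hm, h0, h1, h2⟩ := hx j k i (by omega)
      exact ⟨hm, h2, h0, h1⟩
    · intro a i b i' hne
      fin_cases a <;> fin_cases b
      · exact hdist 2 i 2 i' (fun h => hne (by rw [show i = i' from congrArg Prod.snd h]))
      · exact hdist 2 i 0 i' (fun h => absurd (congrArg Prod.fst h) (by decide : ¬((2 : Fin 3) = 0)))
      · exact hdist 2 i 1 i' (fun h => absurd (congrArg Prod.fst h) (by decide : ¬((2 : Fin 3) = 1)))
      · exact hdist 0 i 2 i' (fun h => absurd (congrArg Prod.fst h) (by decide : ¬((0 : Fin 3) = 2)))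
      · exact hdist 0 i 0 i' (fun h => hne (by rw [show i = i' from congrArg Prod.snd h]))
      · exact hdist 0 i 1 i' (fun h => absurd (congrArg Prod.fst h) (by decide : ¬((0 : Fin 3) = 1)))
      · exact hdist 1 i 2 i' (fun h => absurd (congrArg Prod.fst h) (by decide : ¬((1 : Fin 3) = 2)))
      · exact hdist 1 i 0 i' (fun h => absurd (congrArg Prod.fst h) (by decide : ¬((1 : Fin 3) = 0)))
      · exact hdist 1 i 1 i' (fun h => hne (by rw [show i = i' from congrArg Prod.snd h]))
    · intro P hP
      obtain ⟨i0, j0, k0, hsum, hPeq⟩ := hXeq P hP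
      exact ⟨k0, i0, j0, by omega, hPeq⟩
end
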